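/- Let H be a cocommutative involutive Hopf ℂ-algebra and ρ an antisymmetric Fox pairing on H. Then the associated double bracket ⟨⟨a,b⟩⟩_ρ = b_[1] S(ρ(a_[2],b_[2])_[1]) a_[1] ⊗ ρ(a_[2],b_[2])_[2] is adapted to the antipode: (S⊗S)(⟨⟨a,b⟩⟩_ρ) = (⟨⟨S(a),S(b)⟩⟩_ρ)^∘ for all a,b ∈ H, where (c⊗d)^∘ = d⊗c. -/

import Mathlib

open TensorProduct

noncomputable section

namespace Stmt12

variable {H : Type*} [Ring H] [HopfAlgebra ℂ H]

/-- The antipode of `H`. -/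
def S : H →ₗ[ℂ] H := HopfAlgebra.antipode ℂ

/-- The comultiplication of `H`. -/
def Δ : H →ₗ[ℂ] H ⊗[ℂ] H := Coalgebra.comul

/-- The counit of `H`. -/
def ε : H →ₗ[ℂ] ℂ := Coalgebra.counit

/-- The multiplication of `H` as a linear map on the tensor square. -/
def mulH : H ⊗[ℂ] H →ₗ[ℂ] H := LinearMap.mul' ℂ H

/-- The flip `(c ⊗ d)^∘ = d ⊗ c` on `H ⊗[ℂ] H`. -/
def flipT : H ⊗[ℂ] H →ₗ[ℂ] H ⊗[ℂ] H := (TensorProduct.comm ℂ H H).toLinearMap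

/-- `H` is cocommutative. -/
def IsCocomm (H : Type*) [Ring H] [HopfAlgebra ℂ H] : Prop :=
  ∀ a : H, (TensorProduct.comm ℂ H H) (Coalgebra.comul (R := ℂ) a) = Coalgebra.comul (R := ℂ) a

/-- `H` is involutive: the antipode squares to the identity. -/
def IsInvolutive (H : Type*) [Ring H] [HopfAlgebra ℂ H] : Prop :=
  ∀ a : H, S (S a) = a

/-- `ρ` is a Fox pairing: a left Fox derivative in its first argument and a
right Fox derivative in its second argument. -/
def IsFoxPairing (ρ : H →ₗ[ℂ] H →ₗ[ℂ] H) : Prop :=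
  (∀ a b c : H, ρ (a * b) c = ε b • ρ a c + a * ρ b c) ∧
  (∀ a b c : H, ρ c (a * b) = ρ c a * b + ε a • ρ c b)

/-- `ρ` is antisymmetric: its transpose `ρ̄(a,b) = S(ρ(S b, S a))` equals `−ρ`. -/
def IsAntisymmetric (ρ : H →ₗ[ℂ] H →ₗ[ℂ] H) : Prop :=
  ∀ a b : H, S (ρ (S b) (S a)) = - ρ a b

/-- `(x ⊗ y) ⊗ z ↦ y * S(z) * x`. -/
def firstFac : (H ⊗[ℂ] H) ⊗[ℂ] H →ₗ[ℂ] H :=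
  (mulH ∘ₗ (TensorProduct.map mulH LinearMap.id) ∘ₗ
    ((TensorProduct.assoc ℂ H H H).trans (TensorProduct.comm ℂ H (H ⊗[ℂ] H))).toLinearMap)
  ∘ₗ TensorProduct.map (LinearMap.id : H ⊗[ℂ] H →ₗ[ℂ] H ⊗[ℂ] H) S

/-- `ρ` as a linear map on the tensor square. -/
def ρT (ρ : H →ₗ[ℂ] H →ₗ[ℂ] H) : H ⊗[ℂ] H →ₗ[ℂ] H := TensorProduct.lift ρ

/-- The Massuyeau–Turaev double bracket associated with a Fox pairing, as a linear map:
`a ⊗ b ↦ b₍₁₎ S(ρ(a₍₂₎,b₍₂₎)₍₁₎) a₍₁₎ ⊗ ρ(a₍₂₎,b₍₂₎)₍₂₎`. -/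
def dbrMap (ρ : H →ₗ[ℂ] H →ₗ[ℂ] H) : H ⊗[ℂ] H →ₗ[ℂ] H ⊗[ℂ] H :=
  (TensorProduct.map firstFac LinearMap.id)
  ∘ₗ (TensorProduct.assoc ℂ (H ⊗[ℂ] H) H H).symm.toLinearMap
  ∘ₗ (TensorProduct.map LinearMap.id (Δ ∘ₗ ρT ρ))
  ∘ₗ (TensorProduct.tensorTensorTensorComm ℂ H H H H).toLinearMap
  ∘ₗ (TensorProduct.map Δ Δ)

set_option maxHeartbeats 1000000
set_option synthInstance.maxHeartbeats 400000

open Coalgebra LinearMap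

/-- A representation of `comul a` with a bundled index type. -/
structure Repr (R : Type*) {A : Type*} [CommSemiring R] [AddCommMonoid A] [Module R A]
    [CoalgebraStruct R A] (a : A) where
  {ι : Type*}
  index : Finset ι
  left : ι → A
  right : ι → A
  eq : ∑ i ∈ index, left i ⊗ₜ[R] right i = CoalgebraStruct.comul a

/-- An arbitrarily chosen representation. -/
def Repr.arb (R : Type*) {A : Type*} [CommSemiring R] [AddCommMonoid A] [Module R A]
    [CoalgebraStruct R A] (a : A) : Repr R a :=
  ⟨(Coalgebra.Repr.arbitrary R a).index, (Coalgebra.Repr.arbitrary R a).left,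
    (Coalgebra.Repr.arbitrary R a).right, (Coalgebra.Repr.arbitrary R a).eq⟩

/-- Conversion to Mathlib's representation. -/
abbrev Repr.toC {R : Type*} {A : Type*} [CommSemiring R] [AddCommMonoid A] [Module R A]
    [CoalgebraStruct R A] {a : A} (r : Repr R a) : Coalgebra.Repr R a r.ι :=
  ⟨r.index, r.left, r.right, r.eq⟩

/-! ### Part 0: repr helpers -/

/-- swapped representation, using cocommutativity -/
def reprSwap (hco : IsCocomm H) {x : H} (r : Repr ℂ x) : Repr ℂ x where
  index := r.index
  left := r.right
  right := r.left
  eq := by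
    have h := congrArg (TensorProduct.comm ℂ H H) r.eq
    rw [hco x] at h
    simpa [map_sum] using h

lemma sum_counit_left_smul {x : H} (r : Repr ℂ x) {M : Type*} [AddCommMonoid M]
    [Module ℂ M] (F : H →ₗ[ℂ] M) :
    ∑ i ∈ r.index, ε (r.left i) • F (r.right i) = F x := by
  have h : ∑ i ∈ r.index, ε (r.left i) • r.right i = x := by
    have h2 := congrArg (TensorProduct.lid ℂ H) (Coalgebra.sum_counit_tmul_eq r.toC)
    simp only [map_sum, TensorProduct.lid_tmul] at h2
    simpa [ε] using h2
  calc ∑ i ∈ r.index, ε (r.left i) • F (r.right i)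
      = F (∑ i ∈ r.index, ε (r.left i) • r.right i) := by
        rw [map_sum]; simp
    _ = F x := by rw [h]

lemma sum_counit_right_smul {x : H} (r : Repr ℂ x) {M : Type*} [AddCommMonoid M]
    [Module ℂ M] (F : H →ₗ[ℂ] M) :
    ∑ i ∈ r.index, ε (r.right i) • F (r.left i) = F x := by
  have h : ∑ i ∈ r.index, ε (r.right i) • r.left i = x := by
    have h2 := congrArg (TensorProduct.rid ℂ H) (Coalgebra.sum_tmul_counit_eq r.toC)
    simp only [map_sum, TensorProduct.rid_tmul] at h2
    simpa [ε] using h2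
  calc ∑ i ∈ r.index, ε (r.right i) • F (r.left i)
      = F (∑ i ∈ r.index, ε (r.right i) • r.left i) := by
        rw [map_sum]; simp
    _ = F x := by rw [h]

lemma sum_counit_counit {x : H} (r : Repr ℂ x) :
    ∑ i ∈ r.index, ε (r.left i) * ε (r.right i) = ε x := by
  simpa [smul_eq_mul] using sum_counit_left_smul r (ε (H := H))

lemma swap_sum (hco : IsCocomm H) {M : Type*} [AddCommMonoid M] [Module ℂ M]
    (h : H →ₗ[ℂ] H →ₗ[ℂ] M) {x : H} (r : Repr ℂ x) :
    ∑ i ∈ r.index, h (r.left i) (r.right i) = ∑ i ∈ r.index, h (r.right i) (r.left i) := by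
  have e1 : ∑ i ∈ r.index, h (r.left i) (r.right i) = TensorProduct.lift h (comul (R := ℂ) x) := by
    rw [← r.eq]; simp [map_sum]
  have e2 : ∑ i ∈ r.index, h (r.right i) (r.left i) = TensorProduct.lift h (comul (R := ℂ) x) := by
    rw [← (reprSwap hco r).eq]
    simp [map_sum, reprSwap]
  rw [e1, e2]

/-- sum of `antipode (left) * right` -/
lemma sum_S_mul {x : H} (r : Repr ℂ x) :
    ∑ i ∈ r.index, S (r.left i) * r.right i = ε x • 1 := by
  simpa [S, ε] using HopfAlgebra.sum_antipode_mul_eq_smul r.toC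

lemma sum_mul_S {x : H} (r : Repr ℂ x) :
    ∑ i ∈ r.index, r.left i * S (r.right i) = ε x • 1 := by
  simpa [S, ε] using HopfAlgebra.sum_mul_antipode_eq_smul r.toC

lemma sum_S_mul' (hco : IsCocomm H) {x : H} (r : Repr ℂ x) :
    ∑ i ∈ r.index, S (r.right i) * r.left i = ε x • 1 :=
  sum_S_mul (reprSwap hco r)

lemma sum_mul_S' (hco : IsCocomm H) {x : H} (r : Repr ℂ x) :
    ∑ i ∈ r.index, r.right i * S (r.left i) = ε x • 1 :=
  sum_mul_S (reprSwap hco r)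


/-! ### Part 1: generic convolution framework -/

section Conv

variable {C : Type*} [AddCommMonoid C] [Module ℂ C] [CoalgebraStruct ℂ C]
variable {A : Type*} [Semiring A] [Algebra ℂ A]

/-- Convolution product of linear maps from a coalgebra to an algebra. -/
def conv (f g : C →ₗ[ℂ] A) : C →ₗ[ℂ] A :=
  LinearMap.mul' ℂ A ∘ₗ TensorProduct.map f g ∘ₗ CoalgebraStruct.comul

/-- Convolution unit. -/
def cunit : C →ₗ[ℂ] A := Algebra.linearMap ℂ A ∘ₗ CoalgebraStruct.counit

lemma conv_repr (f g : C →ₗ[ℂ] A) {c : C} (r : Repr ℂ c) :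
    conv f g c = ∑ i ∈ r.index, f (r.left i) * g (r.right i) := by
  simp only [conv, LinearMap.comp_apply, ← r.eq, map_sum, TensorProduct.map_tmul,
    LinearMap.mul'_apply]

lemma cunit_apply (c : C) : (cunit (A := A)) c = CoalgebraStruct.counit (R := ℂ) c • 1 := by
  simp [cunit, Algebra.smul_def]

section CoalgLaws

variable (hcoa : ∀ c : C, (TensorProduct.assoc ℂ C C C)
      ((CoalgebraStruct.comul (R := ℂ)).rTensor C (CoalgebraStruct.comul c))
        = (CoalgebraStruct.comul (R := ℂ)).lTensor C (CoalgebraStruct.comul c))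
variable (hcul : ∀ c : C, (CoalgebraStruct.counit (R := ℂ)).rTensor C
      (CoalgebraStruct.comul c) = 1 ⊗ₜ[ℂ] c)
variable (hcur : ∀ c : C, (CoalgebraStruct.counit (R := ℂ)).lTensor C
      (CoalgebraStruct.comul c) = c ⊗ₜ[ℂ] (1:ℂ))

include hcoa in
lemma conv_assoc (f g h : C →ₗ[ℂ] A) : conv (conv f g) h = conv f (conv g h) := by
  ext c
  set r := Repr.arb ℂ c with hr
  set a₁ : (i : r.ι) → Repr ℂ (r.left i) := fun i => Repr.arb ℂ (r.left i)
  set a₂ : (i : r.ι) → Repr ℂ (r.right i) := fun i => Repr.arb ℂ (r.right i)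
  have key : ∑ i ∈ r.index, ∑ j ∈ (a₁ i).index,
      (a₁ i).left j ⊗ₜ[ℂ] ((a₁ i).right j ⊗ₜ[ℂ] r.right i)
      = ∑ i ∈ r.index, ∑ j ∈ (a₂ i).index,
      r.left i ⊗ₜ[ℂ] ((a₂ i).left j ⊗ₜ[ℂ] (a₂ i).right j) := by
    have hc := hcoa c
    rw [← r.eq] at hc
    simp only [map_sum, LinearMap.rTensor_tmul, LinearMap.lTensor_tmul] at hc
    calc ∑ i ∈ r.index, ∑ j ∈ (a₁ i).index,
          (a₁ i).left j ⊗ₜ[ℂ] ((a₁ i).right j ⊗ₜ[ℂ] r.right i)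
        = ∑ i ∈ r.index, (TensorProduct.assoc ℂ C C C)
            ((CoalgebraStruct.comul (R := ℂ) (r.left i)) ⊗ₜ[ℂ] r.right i) := by
          refine Finset.sum_congr rfl fun i _ => ?_
          rw [← (a₁ i).eq]
          simp [TensorProduct.sum_tmul, map_sum]
      _ = ∑ i ∈ r.index, r.left i ⊗ₜ[ℂ] CoalgebraStruct.comul (R := ℂ) (r.right i) := hc
      _ = _ := by
          refine Finset.sum_congr rfl fun i _ => ?_
          rw [← (a₂ i).eq]
          simp [TensorProduct.tmul_sum]
  have := congrArg (LinearMap.mul' ℂ A ∘ₗ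
    TensorProduct.map f (LinearMap.mul' ℂ A ∘ₗ TensorProduct.map g h)) key
  simp only [map_sum, LinearMap.comp_apply, TensorProduct.map_tmul,
    LinearMap.mul'_apply] at this
  calc conv (conv f g) h c
      = ∑ i ∈ r.index, (conv f g) (r.left i) * h (r.right i) := conv_repr _ _ r
    _ = ∑ i ∈ r.index, ∑ j ∈ (a₁ i).index,
          f ((a₁ i).left j) * ((g ((a₁ i).right j)) * h (r.right i)) := by
        refine Finset.sum_congr rfl fun i _ => ?_
        rw [conv_repr f g (a₁ i), Finset.sum_mul]
        exact Finset.sum_congr rfl fun j _ => (mul_assoc _ _ _)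
    _ = ∑ i ∈ r.index, ∑ j ∈ (a₂ i).index,
          f (r.left i) * (g ((a₂ i).left j) * h ((a₂ i).right j)) := this
    _ = ∑ i ∈ r.index, f (r.left i) * (conv g h) (r.right i) := by
        refine Finset.sum_congr rfl fun i _ => ?_
        rw [conv_repr g h (a₂ i), Finset.mul_sum]
    _ = conv f (conv g h) c := (conv_repr _ _ r).symm

include hcul in
lemma conv_cunit_left (f : C →ₗ[ℂ] A) : conv cunit f = f := by
  ext c
  set r := Repr.arb ℂ c with hr
  have h : ∑ i ∈ r.index, CoalgebraStruct.counit (R := ℂ) (r.left i) • r.right i = c := by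
    have h2 := congrArg (TensorProduct.lid ℂ C) (hcul c)
    rw [← r.eq] at h2
    simp only [map_sum, LinearMap.rTensor_tmul, TensorProduct.lid_tmul, one_smul] at h2
    exact h2
  calc conv cunit f c = ∑ i ∈ r.index, cunit (r.left i) * f (r.right i) := conv_repr _ _ r
    _ = ∑ i ∈ r.index, CoalgebraStruct.counit (R := ℂ) (r.left i) • f (r.right i) := by
        refine Finset.sum_congr rfl fun i _ => ?_
        rw [cunit_apply, smul_mul_assoc, one_mul]
    _ = f (∑ i ∈ r.index, CoalgebraStruct.counit (R := ℂ) (r.left i) • r.right i) := by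
        rw [map_sum]; simp
    _ = f c := by rw [h]

include hcur in
lemma conv_cunit_right (f : C →ₗ[ℂ] A) : conv f cunit = f := by
  ext c
  set r := Repr.arb ℂ c with hr
  have h : ∑ i ∈ r.index, CoalgebraStruct.counit (R := ℂ) (r.right i) • r.left i = c := by
    have h2 := congrArg (TensorProduct.rid ℂ C) (hcur c)
    rw [← r.eq] at h2
    simp only [map_sum, LinearMap.lTensor_tmul, TensorProduct.rid_tmul, one_smul] at h2
    exact h2
  calc conv f cunit c = ∑ i ∈ r.index, f (r.left i) * cunit (r.right i) := conv_repr _ _ r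
    _ = ∑ i ∈ r.index, CoalgebraStruct.counit (R := ℂ) (r.right i) • f (r.left i) := by
        refine Finset.sum_congr rfl fun i _ => ?_
        rw [cunit_apply, mul_smul_comm, mul_one]
    _ = f (∑ i ∈ r.index, CoalgebraStruct.counit (R := ℂ) (r.right i) • r.left i) := by
        rw [map_sum]; simp
    _ = f c := by rw [h]

include hcoa hcul hcur in
lemma conv_inv_unique {f g h : C →ₗ[ℂ] A} (h1 : conv g f = cunit) (h2 : conv f h = cunit) :
    g = h := by
  have : conv g (conv f h) = conv (conv g f) h := (conv_assoc hcoa g f h).symm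
  rw [h1, h2, conv_cunit_right hcur, conv_cunit_left hcul] at this
  exact this

end CoalgLaws

variable (hcc : ∀ c : C, (TensorProduct.comm ℂ C C) (CoalgebraStruct.comul (R := ℂ) c)
    = CoalgebraStruct.comul (R := ℂ) c)

include hcc in
lemma swap_sumC {M : Type*} [AddCommMonoid M] [Module ℂ M]
    (h : C →ₗ[ℂ] C →ₗ[ℂ] M) {c : C} (r : Repr ℂ c) :
    ∑ i ∈ r.index, h (r.left i) (r.right i) = ∑ i ∈ r.index, h (r.right i) (r.left i) := by
  have e1 : ∑ i ∈ r.index, h (r.left i) (r.right i)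
      = TensorProduct.lift h (CoalgebraStruct.comul (R := ℂ) c) := by
    rw [← r.eq]; simp [map_sum]
  have e2 : ∑ i ∈ r.index, h (r.right i) (r.left i)
      = TensorProduct.lift h ((TensorProduct.comm ℂ C C) (CoalgebraStruct.comul (R := ℂ) c)) := by
    rw [← r.eq]; simp [map_sum]
  rw [e1, e2, hcc c]

include hcc in
lemma conv_comm (f g : C →ₗ[ℂ] A) (hfg : ∀ c d, f c * g d = g d * f c) :
    conv f g = conv g f := by
  ext c
  set r := Repr.arb ℂ c with hr
  have h : C →ₗ[ℂ] C →ₗ[ℂ] A := ((LinearMap.mul ℂ A).comp g).compl₂ f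
  calc conv f g c = ∑ i ∈ r.index, f (r.left i) * g (r.right i) := conv_repr _ _ r
    _ = ∑ i ∈ r.index, (((LinearMap.mul ℂ A).comp g).compl₂ f) (r.right i) (r.left i) := by
        refine Finset.sum_congr rfl fun i _ => ?_
        simp only [LinearMap.compl₂_apply, LinearMap.comp_apply, LinearMap.mul_apply']
        exact hfg _ _
    _ = ∑ i ∈ r.index, (((LinearMap.mul ℂ A).comp g).compl₂ f) (r.left i) (r.right i) :=
        (swap_sumC hcc _ r).symm
    _ = ∑ i ∈ r.index, g (r.left i) * f (r.right i) := by
        refine Finset.sum_congr rfl fun i _ => ?_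
        simp [LinearMap.compl₂_apply, LinearMap.mul_apply']
    _ = conv g f c := (conv_repr _ _ r).symm

variable {A' : Type*} [Semiring A'] [Algebra ℂ A']

lemma hom_conv (φ : A →ₗ[ℂ] A') (hφ : ∀ u v : A, φ (u * v) = φ u * φ v)
    (f g : C →ₗ[ℂ] A) : φ ∘ₗ conv f g = conv (φ ∘ₗ f) (φ ∘ₗ g) := by
  ext c
  set r := Repr.arb ℂ c with hr
  calc φ (conv f g c) = φ (∑ i ∈ r.index, f (r.left i) * g (r.right i)) := by rw [conv_repr _ _ r]
    _ = ∑ i ∈ r.index, φ (f (r.left i)) * φ (g (r.right i)) := by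
        rw [map_sum]; exact Finset.sum_congr rfl fun i _ => hφ _ _
    _ = ∑ i ∈ r.index, (φ ∘ₗ f) (r.left i) * (φ ∘ₗ g) (r.right i) := rfl
    _ = conv (φ ∘ₗ f) (φ ∘ₗ g) c := (conv_repr _ _ r).symm

include hcc in
lemma antihom_conv (φ : A →ₗ[ℂ] A') (hφ : ∀ u v : A, φ (u * v) = φ v * φ u)
    (f g : C →ₗ[ℂ] A) : φ ∘ₗ conv f g = conv (φ ∘ₗ g) (φ ∘ₗ f) := by
  ext c
  set r := Repr.arb ℂ c with hr
  calc φ (conv f g c) = φ (∑ i ∈ r.index, f (r.left i) * g (r.right i)) := by rw [conv_repr _ _ r]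
    _ = ∑ i ∈ r.index, φ (g (r.right i)) * φ (f (r.left i)) := by
        rw [map_sum]; exact Finset.sum_congr rfl fun i _ => hφ _ _
    _ = ∑ i ∈ r.index, ((((LinearMap.mul ℂ A').comp (φ ∘ₗ g)).compl₂ (φ ∘ₗ f)) (r.right i)) (r.left i) := by
        refine Finset.sum_congr rfl fun i _ => ?_
        simp [LinearMap.compl₂_apply, LinearMap.mul_apply']
    _ = ∑ i ∈ r.index, ((((LinearMap.mul ℂ A').comp (φ ∘ₗ g)).compl₂ (φ ∘ₗ f)) (r.left i)) (r.right i) :=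
        (swap_sumC hcc _ r).symm
    _ = ∑ i ∈ r.index, (φ ∘ₗ g) (r.left i) * (φ ∘ₗ f) (r.right i) := by
        refine Finset.sum_congr rfl fun i _ => ?_
        simp [LinearMap.compl₂_apply, LinearMap.mul_apply']
    _ = conv (φ ∘ₗ g) (φ ∘ₗ f) c := (conv_repr _ _ r).symm

variable {C' : Type*} [AddCommMonoid C'] [Module ℂ C'] [CoalgebraStruct ℂ C']

lemma conv_precomp (ψ : C' →ₗ[ℂ] C)
    (hψ : ∀ c : C', CoalgebraStruct.comul (R := ℂ) (ψ c)
      = TensorProduct.map ψ ψ (CoalgebraStruct.comul (R := ℂ) c))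
    (f g : C →ₗ[ℂ] A) : (conv f g) ∘ₗ ψ = conv (f ∘ₗ ψ) (g ∘ₗ ψ) := by
  ext c
  set r := Repr.arb ℂ c with hr
  have hrψ : ∑ i ∈ r.index, ψ (r.left i) ⊗ₜ[ℂ] ψ (r.right i)
      = CoalgebraStruct.comul (R := ℂ) (ψ c) := by
    rw [hψ, ← r.eq]; simp [map_sum]
  calc (conv f g) (ψ c)
      = ∑ i ∈ r.index, f (ψ (r.left i)) * g (ψ (r.right i)) :=
        conv_repr _ _ ⟨r.index, fun i => ψ (r.left i), fun i => ψ (r.right i), hrψ⟩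
    _ = ∑ i ∈ r.index, (f ∘ₗ ψ) (r.left i) * (g ∘ₗ ψ) (r.right i) := rfl
    _ = conv (f ∘ₗ ψ) (g ∘ₗ ψ) c := (conv_repr _ _ r).symm

end Conv

/-! ### Part 2: coalgebra structure on the tensor square -/

variable (H) in
instance instCSTensor : CoalgebraStruct ℂ (H ⊗[ℂ] H) where
  comul := (TensorProduct.tensorTensorTensorComm ℂ H H H H).toLinearMap ∘ₗ
    TensorProduct.map (Coalgebra.comul) (Coalgebra.comul)
  counit := LinearMap.mul' ℂ ℂ ∘ₗ TensorProduct.map Coalgebra.counit Coalgebra.counit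

lemma comulC_tmul {x y : H} (rx : Repr ℂ x) (ry : Repr ℂ y) :
    CoalgebraStruct.comul (R := ℂ) (x ⊗ₜ[ℂ] y)
      = ∑ i ∈ rx.index, ∑ j ∈ ry.index,
          (rx.left i ⊗ₜ[ℂ] ry.left j) ⊗ₜ[ℂ] (rx.right i ⊗ₜ[ℂ] ry.right j) := by
  show (TensorProduct.tensorTensorTensorComm ℂ H H H H).toLinearMap
    (TensorProduct.map (Coalgebra.comul) (Coalgebra.comul) (x ⊗ₜ[ℂ] y)) = _
  rw [TensorProduct.map_tmul, ← rx.eq, ← ry.eq]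
  rw [TensorProduct.sum_tmul]
  rw [map_sum]
  refine Finset.sum_congr rfl fun i _ => ?_
  rw [TensorProduct.tmul_sum, map_sum]
  refine Finset.sum_congr rfl fun j _ => ?_
  simp

lemma counitC_tmul (x y : H) :
    CoalgebraStruct.counit (R := ℂ) (x ⊗ₜ[ℂ] y) = ε x * ε y := by
  show (LinearMap.mul' ℂ ℂ) (TensorProduct.map Coalgebra.counit Coalgebra.counit (x ⊗ₜ[ℂ] y)) = _
  simp [ε]

lemma sum_reorder4 {M : Type*} [AddCommMonoid M] {ιa ιb : Type*} (sa : Finset ιa)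
    (sb : Finset ιb) {ιm : ιa → Type*} (sm : ∀ i, Finset (ιm i)) {ιn : ιb → Type*}
    (sn : ∀ j, Finset (ιn j)) (F : ∀ (i : ιa) (j : ιb), ιm i → ιn j → M) :
    ∑ i ∈ sa, ∑ j ∈ sb, ∑ m ∈ sm i, ∑ n ∈ sn j, F i j m n
      = ∑ j ∈ sb, ∑ n ∈ sn j, ∑ i ∈ sa, ∑ m ∈ sm i, F i j m n := by
  rw [Finset.sum_comm]
  refine Finset.sum_congr rfl fun j _ => ?_
  calc ∑ i ∈ sa, ∑ m ∈ sm i, ∑ n ∈ sn j, F i j m n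
      = ∑ i ∈ sa, ∑ n ∈ sn j, ∑ m ∈ sm i, F i j m n :=
        Finset.sum_congr rfl fun i _ => Finset.sum_comm
    _ = ∑ n ∈ sn j, ∑ i ∈ sa, ∑ m ∈ sm i, F i j m n := Finset.sum_comm

lemma coassocC (c : H ⊗[ℂ] H) :
    (TensorProduct.assoc ℂ (H ⊗[ℂ] H) (H ⊗[ℂ] H) (H ⊗[ℂ] H))
      ((CoalgebraStruct.comul (R := ℂ)).rTensor _ (CoalgebraStruct.comul c))
        = (CoalgebraStruct.comul (R := ℂ)).lTensor _ (CoalgebraStruct.comul c) := by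
  induction c using TensorProduct.induction_on with
  | zero => simp
  | add u v hu hv => simp only [map_add, hu, hv]
  | tmul x y =>
    set rx := Repr.arb ℂ x with hrx
    set ry := Repr.arb ℂ y with hry
    set ax₁ : (i : rx.ι) → Repr ℂ (rx.left i) := fun i => Repr.arb ℂ (rx.left i)
    set ax₂ : (i : rx.ι) → Repr ℂ (rx.right i) := fun i => Repr.arb ℂ (rx.right i)
    set ay₁ : (j : ry.ι) → Repr ℂ (ry.left j) := fun j => Repr.arb ℂ (ry.left j)
    set ay₂ : (j : ry.ι) → Repr ℂ (ry.right j) := fun j => Repr.arb ℂ (ry.right j)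
    set Ψ : (H ⊗[ℂ] (H ⊗[ℂ] H)) ⊗[ℂ] (H ⊗[ℂ] (H ⊗[ℂ] H)) →ₗ[ℂ]
        (H ⊗[ℂ] H) ⊗[ℂ] ((H ⊗[ℂ] H) ⊗[ℂ] (H ⊗[ℂ] H)) :=
      LinearMap.lTensor (H ⊗[ℂ] H) (TensorProduct.tensorTensorTensorComm ℂ H H H H).toLinearMap
        ∘ₗ (TensorProduct.tensorTensorTensorComm ℂ H (H ⊗[ℂ] H) H (H ⊗[ℂ] H)).toLinearMap
      with hΨ
    have hΨt : ∀ (x1 x2 x3 y1 y2 y3 : H),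
        Ψ ((x1 ⊗ₜ[ℂ] (x2 ⊗ₜ[ℂ] x3)) ⊗ₜ[ℂ] (y1 ⊗ₜ[ℂ] (y2 ⊗ₜ[ℂ] y3)))
          = (x1 ⊗ₜ[ℂ] y1) ⊗ₜ[ℂ] ((x2 ⊗ₜ[ℂ] y2) ⊗ₜ[ℂ] (x3 ⊗ₜ[ℂ] y3)) := by
      intro x1 x2 x3 y1 y2 y3
      simp [hΨ, TensorProduct.tensorTensorTensorComm_tmul]
    have key : Ψ ((∑ i ∈ rx.index, ∑ m ∈ (ax₁ i).index,
          (ax₁ i).left m ⊗ₜ[ℂ] ((ax₁ i).right m ⊗ₜ[ℂ] rx.right i)) ⊗ₜ[ℂ]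
        (∑ j ∈ ry.index, ∑ n ∈ (ay₁ j).index,
          (ay₁ j).left n ⊗ₜ[ℂ] ((ay₁ j).right n ⊗ₜ[ℂ] ry.right j)))
        = Ψ ((∑ i ∈ rx.index, ∑ p ∈ (ax₂ i).index,
          rx.left i ⊗ₜ[ℂ] ((ax₂ i).left p ⊗ₜ[ℂ] (ax₂ i).right p)) ⊗ₜ[ℂ]
        (∑ j ∈ ry.index, ∑ q ∈ (ay₂ j).index,
          ry.left j ⊗ₜ[ℂ] ((ay₂ j).left q ⊗ₜ[ℂ] (ay₂ j).right q))) := by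
      rw [Coalgebra.sum_tmul_tmul_eq rx.toC (fun i => (ax₁ i).toC) (fun i => (ax₂ i).toC),
        Coalgebra.sum_tmul_tmul_eq ry.toC (fun i => (ay₁ i).toC) (fun i => (ay₂ i).toC)]
    -- expand both sides of key
    simp only [TensorProduct.sum_tmul, TensorProduct.tmul_sum, map_sum, hΨt] at key
    -- compute the goal's LHS
    have hL : (TensorProduct.assoc ℂ (H ⊗[ℂ] H) (H ⊗[ℂ] H) (H ⊗[ℂ] H))
        ((CoalgebraStruct.comul (R := ℂ)).rTensor _ (CoalgebraStruct.comul (x ⊗ₜ[ℂ] y)))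
        = ∑ i ∈ rx.index, ∑ j ∈ ry.index, ∑ m ∈ (ax₁ i).index, ∑ n ∈ (ay₁ j).index,
            ((ax₁ i).left m ⊗ₜ[ℂ] (ay₁ j).left n) ⊗ₜ[ℂ]
              (((ax₁ i).right m ⊗ₜ[ℂ] (ay₁ j).right n) ⊗ₜ[ℂ] (rx.right i ⊗ₜ[ℂ] ry.right j)) := by
      rw [comulC_tmul rx ry]
      simp only [map_sum]
      refine Finset.sum_congr rfl fun i _ => Finset.sum_congr rfl fun j _ => ?_
      rw [LinearMap.rTensor_tmul, comulC_tmul (ax₁ i) (ay₁ j)]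
      simp only [TensorProduct.sum_tmul, map_sum, TensorProduct.assoc_tmul]
    have hR : (CoalgebraStruct.comul (R := ℂ)).lTensor _
        (CoalgebraStruct.comul ((x ⊗ₜ[ℂ] y : H ⊗[ℂ] H)))
        = ∑ i ∈ rx.index, ∑ j ∈ ry.index, ∑ p ∈ (ax₂ i).index, ∑ q ∈ (ay₂ j).index,
            (rx.left i ⊗ₜ[ℂ] ry.left j) ⊗ₜ[ℂ]
              (((ax₂ i).left p ⊗ₜ[ℂ] (ay₂ j).left q) ⊗ₜ[ℂ] ((ax₂ i).right p ⊗ₜ[ℂ] (ay₂ j).right q)) := by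
      rw [comulC_tmul rx ry]
      simp only [map_sum]
      refine Finset.sum_congr rfl fun i _ => Finset.sum_congr rfl fun j _ => ?_
      rw [LinearMap.lTensor_tmul, comulC_tmul (ax₂ i) (ay₂ j)]
      simp only [TensorProduct.tmul_sum]
    rw [hL, hR]
    rw [sum_reorder4 rx.index ry.index (fun i => (ax₁ i).index) (fun j => (ay₁ j).index)]
    rw [sum_reorder4 rx.index ry.index (fun i => (ax₂ i).index) (fun j => (ay₂ j).index)]
    exact key

lemma cscalar_tmul {M : Type*} [AddCommMonoid M] [Module ℂ M] (k : ℂ) (m : M) :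
    k ⊗ₜ[ℂ] m = (1:ℂ) ⊗ₜ[ℂ] (k • m) := by
  conv_lhs => rw [show k = k • (1:ℂ) by simp]
  rw [TensorProduct.smul_tmul]

lemma tmul_cscalar {M : Type*} [AddCommMonoid M] [Module ℂ M] (m : M) (k : ℂ) :
    m ⊗ₜ[ℂ] k = (k • m) ⊗ₜ[ℂ] (1:ℂ) := by
  conv_lhs => rw [show k = k • (1:ℂ) by simp]
  rw [← TensorProduct.smul_tmul]

lemma counitLC (c : H ⊗[ℂ] H) :
    (CoalgebraStruct.counit (R := ℂ)).rTensor _ (CoalgebraStruct.comul c) = 1 ⊗ₜ[ℂ] c := by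
  induction c using TensorProduct.induction_on with
  | zero => simp
  | add u v hu hv => simp only [map_add, hu, hv, TensorProduct.tmul_add]
  | tmul x y =>
    set rx := Repr.arb ℂ x with hrx
    set ry := Repr.arb ℂ y with hry
    rw [comulC_tmul rx ry]
    simp only [map_sum, LinearMap.rTensor_tmul, counitC_tmul]
    rw [Finset.sum_congr rfl (fun i _ => Finset.sum_congr rfl
      (fun j _ => cscalar_tmul (ε (rx.left i) * ε (ry.left j)) (rx.right i ⊗ₜ[ℂ] ry.right j)))]
    simp only [← TensorProduct.tmul_sum]
    congr 1
    calc ∑ i ∈ rx.index, ∑ j ∈ ry.index,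
          (ε (rx.left i) * ε (ry.left j)) • (rx.right i ⊗ₜ[ℂ] ry.right j)
        = ∑ i ∈ rx.index, ε (rx.left i) •
            (∑ j ∈ ry.index, ε (ry.left j) • (rx.right i ⊗ₜ[ℂ] ry.right j)) := by
          refine Finset.sum_congr rfl fun i _ => ?_
          rw [Finset.smul_sum]
          exact Finset.sum_congr rfl fun j _ => (mul_smul _ _ _)
      _ = ∑ i ∈ rx.index, ε (rx.left i) • (rx.right i ⊗ₜ[ℂ] y) := by
          refine Finset.sum_congr rfl fun i _ => ?_
          congr 1
          exact sum_counit_left_smul ry (TensorProduct.mk ℂ H H (rx.right i))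
      _ = x ⊗ₜ[ℂ] y := sum_counit_left_smul rx ((TensorProduct.mk ℂ H H).flip y)

lemma counitRC (c : H ⊗[ℂ] H) :
    (CoalgebraStruct.counit (R := ℂ)).lTensor _ (CoalgebraStruct.comul c) = c ⊗ₜ[ℂ] (1:ℂ) := by
  induction c using TensorProduct.induction_on with
  | zero => simp
  | add u v hu hv => simp only [map_add, hu, hv, TensorProduct.add_tmul]
  | tmul x y =>
    set rx := Repr.arb ℂ x with hrx
    set ry := Repr.arb ℂ y with hry
    rw [comulC_tmul rx ry]
    simp only [map_sum, LinearMap.lTensor_tmul, counitC_tmul]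
    rw [Finset.sum_congr rfl (fun i _ => Finset.sum_congr rfl
      (fun j _ => tmul_cscalar (rx.left i ⊗ₜ[ℂ] ry.left j) (ε (rx.right i) * ε (ry.right j))))]
    simp only [← TensorProduct.sum_tmul]
    congr 1
    calc ∑ i ∈ rx.index, ∑ j ∈ ry.index,
          (ε (rx.right i) * ε (ry.right j)) • (rx.left i ⊗ₜ[ℂ] ry.left j)
        = ∑ i ∈ rx.index, ε (rx.right i) •
            (∑ j ∈ ry.index, ε (ry.right j) • (rx.left i ⊗ₜ[ℂ] ry.left j)) := by
          refine Finset.sum_congr rfl fun i _ => ?_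
          rw [Finset.smul_sum]
          exact Finset.sum_congr rfl fun j _ => (mul_smul _ _ _)
      _ = ∑ i ∈ rx.index, ε (rx.right i) • (rx.left i ⊗ₜ[ℂ] y) := by
          refine Finset.sum_congr rfl fun i _ => ?_
          congr 1
          exact sum_counit_right_smul ry (TensorProduct.mk ℂ H H (rx.left i))
      _ = x ⊗ₜ[ℂ] y := sum_counit_right_smul rx ((TensorProduct.mk ℂ H H).flip y)

lemma comm_tttc (X Y : H ⊗[ℂ] H) :
    (TensorProduct.comm ℂ (H ⊗[ℂ] H) (H ⊗[ℂ] H))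
        ((TensorProduct.tensorTensorTensorComm ℂ H H H H) (X ⊗ₜ[ℂ] Y))
      = (TensorProduct.tensorTensorTensorComm ℂ H H H H)
          (((TensorProduct.comm ℂ H H) X) ⊗ₜ[ℂ] ((TensorProduct.comm ℂ H H) Y)) := by
  induction X using TensorProduct.induction_on with
  | zero => simp
  | add u v hu hv => simp only [map_add, TensorProduct.add_tmul, map_add, hu, hv]
  | tmul x1 x2 =>
    induction Y using TensorProduct.induction_on with
    | zero => simp
    | add u v hu hv => simp only [map_add, TensorProduct.tmul_add, map_add, hu, hv]
    | tmul y1 y2 => simp [TensorProduct.tensorTensorTensorComm_tmul]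

lemma cocommC (hco : IsCocomm H) (c : H ⊗[ℂ] H) :
    (TensorProduct.comm ℂ (H ⊗[ℂ] H) (H ⊗[ℂ] H)) (CoalgebraStruct.comul (R := ℂ) c)
      = CoalgebraStruct.comul (R := ℂ) c := by
  induction c using TensorProduct.induction_on with
  | zero => simp
  | add u v hu hv => simp only [map_add, hu, hv]
  | tmul x y =>
    show (TensorProduct.comm ℂ (H ⊗[ℂ] H) (H ⊗[ℂ] H))
      ((TensorProduct.tensorTensorTensorComm ℂ H H H H)
        ((Coalgebra.comul (R := ℂ) x) ⊗ₜ[ℂ] (Coalgebra.comul (R := ℂ) y))) = _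
    rw [comm_tttc, hco x, hco y]
    rfl

/-- representation of a pure tensor in the tensor-square coalgebra -/
def reprTmul {x y : H} (rx : Repr ℂ x) (ry : Repr ℂ y) : Repr ℂ (x ⊗ₜ[ℂ] y : H ⊗[ℂ] H) where
  index := rx.index ×ˢ ry.index
  left := fun p => rx.left p.1 ⊗ₜ[ℂ] ry.left p.2
  right := fun p => rx.right p.1 ⊗ₜ[ℂ] ry.right p.2
  eq := by rw [Finset.sum_product]; exact (comulC_tmul rx ry).symm

lemma conv_tmul {A : Type*} [Semiring A] [Algebra ℂ A] (f g : H ⊗[ℂ] H →ₗ[ℂ] A)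
    {x y : H} (rx : Repr ℂ x) (ry : Repr ℂ y) :
    conv f g (x ⊗ₜ[ℂ] y) = ∑ i ∈ rx.index, ∑ j ∈ ry.index,
      f (rx.left i ⊗ₜ[ℂ] ry.left j) * g (rx.right i ⊗ₜ[ℂ] ry.right j) := by
  rw [conv_repr f g (reprTmul rx ry)]
  simp only [reprTmul]
  rw [Finset.sum_product]

/-! ### Part 3: Hopf algebra basics -/

lemma comul_one' : Coalgebra.comul (R := ℂ) (1 : H) = 1 ⊗ₜ[ℂ] 1 := by
  rw [Bialgebra.comul_one]; rfl

lemma S_one : S (1 : H) = 1 := by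
  have h := HopfAlgebra.mul_antipode_rTensor_comul_apply (R := ℂ) (1 : H)
  rw [comul_one'] at h
  simpa [S] using h

lemma counit_S (x : H) : ε (S x) = ε x := by
  set r := Repr.arb ℂ x with hr
  have h1 := congrArg ε (sum_S_mul r)
  rw [map_sum] at h1
  have h2 : ∀ i ∈ r.index, ε (S (r.left i) * r.right i)
      = ε (r.right i) • (ε ∘ₗ S) (r.left i) := by
    intro i _
    rw [show (ε : H →ₗ[ℂ] ℂ) = Coalgebra.counit from rfl]
    rw [Bialgebra.counit_mul]
    simp [smul_eq_mul, mul_comm]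
  rw [Finset.sum_congr rfl h2] at h1
  rw [sum_counit_right_smul r (ε ∘ₗ S)] at h1
  simpa [ε] using h1

/-- antipode is antimultiplicative -/
lemma S_antimul (x y : H) : S (x * y) = S y * S x := by
  set μ : H ⊗[ℂ] H →ₗ[ℂ] H := LinearMap.mul' ℂ H with hμ
  set ν : H ⊗[ℂ] H →ₗ[ℂ] H :=
    (LinearMap.mul' ℂ H) ∘ₗ (TensorProduct.map S S) ∘ₗ (TensorProduct.comm ℂ H H).toLinearMap
    with hν
  have claim1 : conv μ (S ∘ₗ μ) = cunit := by
    apply LinearMap.ext; intro c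
    induction c using TensorProduct.induction_on with
    | zero => simp
    | add u v hu hv => simp only [map_add, hu, hv]
    | tmul a b =>
      set ra := Repr.arb ℂ a with hra
      set rb := Repr.arb ℂ b with hrb
      rw [conv_tmul _ _ ra rb]
      have hab : ∑ p ∈ ra.index ×ˢ rb.index,
          (ra.left p.1 * rb.left p.2) ⊗ₜ[ℂ] (ra.right p.1 * rb.right p.2)
            = Coalgebra.comul (R := ℂ) (a * b) := by
        rw [Bialgebra.comul_mul, ← ra.eq, ← rb.eq, Finset.sum_mul_sum]
        rw [Finset.sum_product]
        simp [Algebra.TensorProduct.tmul_mul_tmul]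
      have hmul := sum_mul_S (x := a * b) ⟨ra.index ×ˢ rb.index,
        fun p => ra.left p.1 * rb.left p.2, fun p => ra.right p.1 * rb.right p.2, hab⟩
      rw [Finset.sum_product] at hmul
      calc ∑ i ∈ ra.index, ∑ j ∈ rb.index,
            μ (ra.left i ⊗ₜ[ℂ] rb.left j) * (S ∘ₗ μ) (ra.right i ⊗ₜ[ℂ] rb.right j)
          = ∑ i ∈ ra.index, ∑ j ∈ rb.index,
              (ra.left i * rb.left j) * S (ra.right i * rb.right j) := by
            refine Finset.sum_congr rfl fun i _ => Finset.sum_congr rfl fun j _ => ?_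
            simp [hμ, LinearMap.mul'_apply]
        _ = ε (a * b) • 1 := hmul
        _ = cunit (a ⊗ₜ[ℂ] b) := by
            rw [cunit_apply, counitC_tmul]
            rw [show (ε : H →ₗ[ℂ] ℂ) (a * b) = ε a * ε b by
              simpa [ε] using Bialgebra.counit_mul (R := ℂ) a b]
  have claim2 : conv ν μ = cunit := by
    apply LinearMap.ext; intro c
    induction c using TensorProduct.induction_on with
    | zero => simp
    | add u v hu hv => simp only [map_add, hu, hv]
    | tmul a b =>
      set ra := Repr.arb ℂ a with hra
      set rb := Repr.arb ℂ b with hrb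
      rw [conv_tmul _ _ ra rb]
      calc ∑ i ∈ ra.index, ∑ j ∈ rb.index,
            ν (ra.left i ⊗ₜ[ℂ] rb.left j) * μ (ra.right i ⊗ₜ[ℂ] rb.right j)
          = ∑ i ∈ ra.index, ∑ j ∈ rb.index,
              S (rb.left j) * ((S (ra.left i) * ra.right i) * rb.right j) := by
            refine Finset.sum_congr rfl fun i _ => Finset.sum_congr rfl fun j _ => ?_
            simp only [hν, hμ, LinearMap.comp_apply, LinearEquiv.coe_coe,
              TensorProduct.comm_tmul, TensorProduct.map_tmul, LinearMap.mul'_apply]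
            rw [mul_assoc, mul_assoc]
        _ = ∑ j ∈ rb.index, ∑ i ∈ ra.index,
              S (rb.left j) * ((S (ra.left i) * ra.right i) * rb.right j) := Finset.sum_comm
        _ = ∑ j ∈ rb.index, ε a • (S (rb.left j) * rb.right j) := by
            refine Finset.sum_congr rfl fun j _ => ?_
            rw [← Finset.mul_sum, ← Finset.sum_mul, sum_S_mul ra]
            rw [smul_mul_assoc, one_mul, mul_smul_comm]
        _ = ε a • (ε b • 1) := by rw [← Finset.smul_sum, sum_S_mul rb]
        _ = cunit (a ⊗ₜ[ℂ] b) := by rw [cunit_apply, counitC_tmul, mul_smul]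
  have huniq : ν = S ∘ₗ μ :=
    conv_inv_unique coassocC counitLC counitRC claim2 claim1
  have := congrFun (congrArg (fun (f : H ⊗[ℂ] H →ₗ[ℂ] H) => (f : H ⊗[ℂ] H → H)) huniq)
    (x ⊗ₜ[ℂ] y)
  simpa [hν, hμ, LinearMap.mul'_apply] using this.symm

section ComulS

/-- `x ↦ x ⊗ 1` -/
def d₁ : H →ₗ[ℂ] H ⊗[ℂ] H := (TensorProduct.mk ℂ H H).flip 1

/-- `x ↦ 1 ⊗ x` -/
def d₂ : H →ₗ[ℂ] H ⊗[ℂ] H := TensorProduct.mk ℂ H H 1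

@[simp] lemma d₁_apply (x : H) : d₁ x = x ⊗ₜ[ℂ] 1 := rfl
@[simp] lemma d₂_apply (x : H) : d₂ x = 1 ⊗ₜ[ℂ] x := rfl

lemma convH_d₁_d₂ : conv d₁ d₂ = (Coalgebra.comul (R := ℂ) (A := H)) := by
  apply LinearMap.ext; intro x
  set r := Repr.arb ℂ x with hr
  rw [conv_repr _ _ r]
  rw [← r.eq]
  refine Finset.sum_congr rfl fun i _ => ?_
  simp [Algebra.TensorProduct.tmul_mul_tmul]

lemma convH_d₁S_d₁ : conv (d₁ ∘ₗ S) d₁ = (cunit : H →ₗ[ℂ] H ⊗[ℂ] H) := by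
  apply LinearMap.ext; intro x
  set r := Repr.arb ℂ x with hr
  rw [conv_repr _ _ r, cunit_apply]
  calc ∑ i ∈ r.index, (d₁ ∘ₗ S) (r.left i) * d₁ (r.right i)
      = ∑ i ∈ r.index, (S (r.left i) * r.right i) ⊗ₜ[ℂ] ((1:H) * 1) := by
        refine Finset.sum_congr rfl fun i _ => ?_
        simp [Algebra.TensorProduct.tmul_mul_tmul]
    _ = (∑ i ∈ r.index, S (r.left i) * r.right i) ⊗ₜ[ℂ] (1:H) := by
        rw [← TensorProduct.sum_tmul, one_mul]
    _ = CoalgebraStruct.counit (R := ℂ) x • (1 : H ⊗[ℂ] H) := by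
        rw [sum_S_mul r, Algebra.TensorProduct.one_def, TensorProduct.smul_tmul']
        rfl

lemma convH_d₂S_d₂ : conv (d₂ ∘ₗ S) d₂ = (cunit : H →ₗ[ℂ] H ⊗[ℂ] H) := by
  apply LinearMap.ext; intro x
  set r := Repr.arb ℂ x with hr
  rw [conv_repr _ _ r, cunit_apply]
  calc ∑ i ∈ r.index, (d₂ ∘ₗ S) (r.left i) * d₂ (r.right i)
      = ∑ i ∈ r.index, ((1:H) * 1) ⊗ₜ[ℂ] (S (r.left i) * r.right i) := by
        refine Finset.sum_congr rfl fun i _ => ?_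
        simp [Algebra.TensorProduct.tmul_mul_tmul]
    _ = (1:H) ⊗ₜ[ℂ] (∑ i ∈ r.index, S (r.left i) * r.right i) := by
        rw [← TensorProduct.tmul_sum, one_mul]
    _ = CoalgebraStruct.counit (R := ℂ) x • (1 : H ⊗[ℂ] H) := by
        rw [sum_S_mul r, Algebra.TensorProduct.one_def, TensorProduct.tmul_smul]
        rfl

lemma convH_d₂S_d₁S (hco : IsCocomm H) :
    conv (d₂ ∘ₗ S) (d₁ ∘ₗ S)
      = (TensorProduct.map S S) ∘ₗ (Coalgebra.comul (R := ℂ) (A := H)) := by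
  apply LinearMap.ext; intro x
  set r := Repr.arb ℂ x with hr
  rw [conv_repr _ _ r]
  have h2 := congrArg (TensorProduct.map S S) (reprSwap hco r).eq
  rw [map_sum] at h2
  calc ∑ i ∈ r.index, (d₂ ∘ₗ S) (r.left i) * (d₁ ∘ₗ S) (r.right i)
      = ∑ i ∈ r.index, S (r.right i) ⊗ₜ[ℂ] S (r.left i) := by
        refine Finset.sum_congr rfl fun i _ => ?_
        simp [Algebra.TensorProduct.tmul_mul_tmul]
    _ = ∑ i ∈ (reprSwap hco r).index, TensorProduct.map S S
          ((reprSwap hco r).left i ⊗ₜ[ℂ] (reprSwap hco r).right i) := by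
        simp [reprSwap]
    _ = TensorProduct.map S S (Coalgebra.comul (R := ℂ) x) := h2

lemma convH_id_S : conv LinearMap.id S = (cunit : H →ₗ[ℂ] H) := by
  apply LinearMap.ext; intro x
  set r := Repr.arb ℂ x with hr
  rw [conv_repr _ _ r, cunit_apply]
  exact sum_mul_S r

lemma comul_cunit : (Coalgebra.comul (R := ℂ) (A := H)) ∘ₗ (cunit : H →ₗ[ℂ] H)
    = (cunit : H →ₗ[ℂ] H ⊗[ℂ] H) := by
  apply LinearMap.ext; intro x
  simp only [LinearMap.comp_apply, cunit_apply, map_smul, Bialgebra.comul_one]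

lemma convH_Δ_ΔS : conv (Coalgebra.comul (R := ℂ) (A := H))
    ((Coalgebra.comul (R := ℂ) (A := H)) ∘ₗ S) = cunit := by
  have h := hom_conv (C := H) (A := H) (A' := H ⊗[ℂ] H) (Coalgebra.comul (R := ℂ))
    (fun u v => Bialgebra.comul_mul u v) LinearMap.id S
  rw [convH_id_S, comul_cunit, LinearMap.comp_id] at h
  exact h.symm

lemma convH_SSΔ_Δ (hco : IsCocomm H) :
    conv ((TensorProduct.map S S) ∘ₗ (Coalgebra.comul (R := ℂ) (A := H)))
      (Coalgebra.comul (R := ℂ) (A := H)) = cunit := by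
  have hcoa : ∀ c : H, (TensorProduct.assoc ℂ H H H)
      ((CoalgebraStruct.comul (R := ℂ)).rTensor H (CoalgebraStruct.comul c))
        = (CoalgebraStruct.comul (R := ℂ)).lTensor H (CoalgebraStruct.comul c) :=
    fun c => Coalgebra.coassoc_apply c
  rw [← convH_d₂S_d₁S hco, ← convH_d₁_d₂]
  rw [conv_assoc hcoa, ← conv_assoc hcoa (d₁ ∘ₗ S) d₁ d₂]
  rw [convH_d₁S_d₁]
  rw [conv_cunit_left (fun c => Coalgebra.rTensor_counit_comul c)]
  exact convH_d₂S_d₂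

lemma comul_S_map (hco : IsCocomm H) :
    (Coalgebra.comul (R := ℂ) (A := H)) ∘ₗ S
      = (TensorProduct.map S S) ∘ₗ (Coalgebra.comul (R := ℂ) (A := H)) := by
  refine (conv_inv_unique (fun c => Coalgebra.coassoc_apply c)
    (fun c => Coalgebra.rTensor_counit_comul c)
    (fun c => Coalgebra.lTensor_counit_comul c)
    (convH_SSΔ_Δ hco) convH_Δ_ΔS).symm

lemma comul_S_apply (hco : IsCocomm H) (x : H) :
    Coalgebra.comul (R := ℂ) (S x) = TensorProduct.map S S (Coalgebra.comul (R := ℂ) x) :=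
  congrFun (congrArg (fun (f : H →ₗ[ℂ] H ⊗[ℂ] H) => (f : H → H ⊗[ℂ] H)) (comul_S_map hco)) x

end ComulS

/-! ### Part 4: Fox pairing lemmas -/

section Fox

lemma conv_neg_right {C : Type*} [AddCommMonoid C] [Module ℂ C] [CoalgebraStruct ℂ C]
    {A : Type*} [Ring A] [Algebra ℂ A] (f g : C →ₗ[ℂ] A) :
    conv f (-g) = -(conv f g) := by
  apply LinearMap.ext; intro c
  set r := Repr.arb ℂ c with hr
  rw [LinearMap.neg_apply, conv_repr _ _ r, conv_repr _ _ r, ← Finset.sum_neg_distrib]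
  exact Finset.sum_congr rfl fun i _ => by simp

/-- `x ⊗ y ↦ ε y • F x` -/
def px {M : Type*} [AddCommMonoid M] [Module ℂ M] (F : H →ₗ[ℂ] M) : H ⊗[ℂ] H →ₗ[ℂ] M :=
  (TensorProduct.rid ℂ M).toLinearMap ∘ₗ TensorProduct.map F ε

/-- `x ⊗ y ↦ ε x • G y` -/
def qy {M : Type*} [AddCommMonoid M] [Module ℂ M] (G : H →ₗ[ℂ] M) : H ⊗[ℂ] H →ₗ[ℂ] M :=
  (TensorProduct.lid ℂ M).toLinearMap ∘ₗ TensorProduct.map ε G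

@[simp] lemma px_tmul {M : Type*} [AddCommMonoid M] [Module ℂ M] (F : H →ₗ[ℂ] M) (x y : H) :
    px F (x ⊗ₜ[ℂ] y) = ε y • F x := by
  simp [px]

@[simp] lemma qy_tmul {M : Type*} [AddCommMonoid M] [Module ℂ M] (G : H →ₗ[ℂ] M) (x y : H) :
    qy G (x ⊗ₜ[ℂ] y) = ε x • G y := by
  simp [qy]

lemma counit_one' : ε (1 : H) = 1 := by
  simpa [ε] using Bialgebra.counit_one (R := ℂ) (A := H)

variable (φ : H →ₗ[ℂ] H →ₗ[ℂ] H)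

lemma fox_one_right (hRF : ∀ a b c : H, φ c (a * b) = φ c a * b + ε a • φ c b) (c : H) :
    φ c 1 = 0 := by
  have h := hRF 1 1 c
  rw [one_mul, mul_one, counit_one', one_smul] at h
  exact (left_eq_add.mp h)

lemma fox_one_left (hLF : ∀ a b c : H, φ (a * b) c = ε b • φ a c + a * φ b c) (c : H) :
    φ 1 c = 0 := by
  have h := hLF 1 1 c
  rw [one_mul, counit_one', one_smul, one_mul] at h
  exact (left_eq_add.mp h)

/-- right Fox derivative lemma -/
lemma foxE1 (hRF : ∀ a b c : H, φ c (a * b) = φ c a * b + ε a • φ c b)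
    (h1 : ∀ c : H, φ c 1 = 0) :
    conv (TensorProduct.lift φ ∘ₗ LinearMap.lTensor H S) (qy LinearMap.id)
      = -(TensorProduct.lift φ) := by
  apply LinearMap.ext; intro c
  induction c using TensorProduct.induction_on with
  | zero => simp
  | add u v hu hv => simp only [map_add, hu, hv]
  | tmul x y =>
    set rx := Repr.arb ℂ x with hrx
    set ry := Repr.arb ℂ y with hry
    rw [conv_tmul _ _ rx ry]
    have key : ∑ j ∈ ry.index, φ x (S (ry.left j)) * ry.right j = -(φ x y) := by
      have h0 : ∑ j ∈ ry.index, φ x (S (ry.left j) * ry.right j) = 0 := by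
        rw [← map_sum, sum_S_mul ry, map_smul, h1, smul_zero]
      have h2 : ∀ j ∈ ry.index, φ x (S (ry.left j) * ry.right j)
          = φ x (S (ry.left j)) * ry.right j + ε (ry.left j) • φ x (ry.right j) := by
        intro j _
        rw [hRF, counit_S]
      rw [Finset.sum_congr rfl h2, Finset.sum_add_distrib] at h0
      rw [sum_counit_left_smul ry (φ x)] at h0
      exact eq_neg_of_add_eq_zero_left h0
    calc ∑ i ∈ rx.index, ∑ j ∈ ry.index,
          (TensorProduct.lift φ ∘ₗ LinearMap.lTensor H S) (rx.left i ⊗ₜ[ℂ] ry.left j)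
            * (qy LinearMap.id) (rx.right i ⊗ₜ[ℂ] ry.right j)
        = ∑ j ∈ ry.index, ∑ i ∈ rx.index, ε (rx.right i) •
            ((LinearMap.mulRight ℂ (ry.right j) ∘ₗ (φ.flip (S (ry.left j)))) (rx.left i)) := by
          rw [Finset.sum_comm]
          refine Finset.sum_congr rfl fun j _ => Finset.sum_congr rfl fun i _ => ?_
          simp only [LinearMap.comp_apply, LinearMap.lTensor_tmul, TensorProduct.lift.tmul,
            qy_tmul, LinearMap.id_apply, LinearMap.mulRight_apply, LinearMap.flip_apply]
          rw [mul_smul_comm]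
      _ = ∑ j ∈ ry.index, φ x (S (ry.left j)) * ry.right j := by
          refine Finset.sum_congr rfl fun j _ => ?_
          rw [sum_counit_right_smul rx (LinearMap.mulRight ℂ (ry.right j) ∘ₗ (φ.flip (S (ry.left j))))]
          simp
      _ = -(φ x y) := key
      _ = (-(TensorProduct.lift φ)) (x ⊗ₜ[ℂ] y) := by simp

/-- left Fox derivative lemma -/
lemma foxE2 (hLF : ∀ a b c : H, φ (a * b) c = ε b • φ a c + a * φ b c)
    (h1 : ∀ c : H, φ 1 c = 0) :
    conv (px LinearMap.id) (TensorProduct.lift φ ∘ₗ LinearMap.rTensor H S)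
      = -(TensorProduct.lift φ) := by
  apply LinearMap.ext; intro c
  induction c using TensorProduct.induction_on with
  | zero => simp
  | add u v hu hv => simp only [map_add, hu, hv]
  | tmul x y =>
    set rx := Repr.arb ℂ x with hrx
    set ry := Repr.arb ℂ y with hry
    rw [conv_tmul _ _ rx ry]
    have key : ∑ i ∈ rx.index, rx.left i * φ (S (rx.right i)) y = -(φ x y) := by
      have h0 : ∑ i ∈ rx.index, φ (rx.left i * S (rx.right i)) y = 0 := by
        have h3 := congrArg (φ.flip y) (sum_mul_S rx)
        rw [map_sum, map_smul] at h3
        simpa [h1] using h3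
      have h2 : ∀ i ∈ rx.index, φ (rx.left i * S (rx.right i)) y
          = ε (rx.right i) • φ (rx.left i) y + rx.left i * φ (S (rx.right i)) y := by
        intro i _
        rw [hLF, counit_S]
      rw [Finset.sum_congr rfl h2, Finset.sum_add_distrib] at h0
      have h5 : ∑ i ∈ rx.index, ε (rx.right i) • (φ (rx.left i)) y = (φ x) y := by
        simpa using sum_counit_right_smul rx (φ.flip y)
      rw [h5] at h0
      exact eq_neg_of_add_eq_zero_right h0
    calc ∑ i ∈ rx.index, ∑ j ∈ ry.index,
          (px LinearMap.id) (rx.left i ⊗ₜ[ℂ] ry.left j)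
            * (TensorProduct.lift φ ∘ₗ LinearMap.rTensor H S) (rx.right i ⊗ₜ[ℂ] ry.right j)
        = ∑ i ∈ rx.index, ∑ j ∈ ry.index, ε (ry.left j) •
            ((LinearMap.mulLeft ℂ (rx.left i) ∘ₗ (φ (S (rx.right i)))) (ry.right j)) := by
          refine Finset.sum_congr rfl fun i _ => Finset.sum_congr rfl fun j _ => ?_
          simp only [LinearMap.comp_apply, LinearMap.rTensor_tmul, TensorProduct.lift.tmul,
            px_tmul, LinearMap.id_apply, LinearMap.mulLeft_apply]
          rw [smul_mul_assoc]
      _ = ∑ i ∈ rx.index, rx.left i * φ (S (rx.right i)) y := by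
          refine Finset.sum_congr rfl fun i _ => ?_
          rw [sum_counit_left_smul ry (LinearMap.mulLeft ℂ (rx.left i) ∘ₗ (φ (S (rx.right i))))]
          simp
      _ = -(φ x y) := key
      _ = (-(TensorProduct.lift φ)) (x ⊗ₜ[ℂ] y) := by simp

lemma conv_pxS_pxid : conv (px S) (px (LinearMap.id (M := H))) = (cunit : H ⊗[ℂ] H →ₗ[ℂ] H) := by
  apply LinearMap.ext; intro c
  induction c using TensorProduct.induction_on with
  | zero => simp
  | add u v hu hv => simp only [map_add, hu, hv]
  | tmul x y =>
    set rx := Repr.arb ℂ x with hrx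
    set ry := Repr.arb ℂ y with hry
    rw [conv_tmul _ _ rx ry, cunit_apply, counitC_tmul]
    calc ∑ i ∈ rx.index, ∑ j ∈ ry.index,
          (px S) (rx.left i ⊗ₜ[ℂ] ry.left j) * (px LinearMap.id) (rx.right i ⊗ₜ[ℂ] ry.right j)
        = ∑ i ∈ rx.index, ∑ j ∈ ry.index,
            (ε (ry.left j) * ε (ry.right j)) • (S (rx.left i) * rx.right i) := by
          refine Finset.sum_congr rfl fun i _ => Finset.sum_congr rfl fun j _ => ?_
          rw [px_tmul, px_tmul, LinearMap.id_apply, smul_mul_assoc, mul_smul_comm, smul_smul]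
      _ = ∑ i ∈ rx.index, ε y • (S (rx.left i) * rx.right i) := by
          refine Finset.sum_congr rfl fun i _ => ?_
          rw [← Finset.sum_smul, sum_counit_counit ry]
      _ = ε y • (ε x • 1) := by rw [← Finset.smul_sum, sum_S_mul rx]
      _ = (ε x * ε y) • (1 : H) := by rw [smul_smul, mul_comm]

lemma conv_qyid_qyS : conv (qy (LinearMap.id (M := H))) (qy S) = (cunit : H ⊗[ℂ] H →ₗ[ℂ] H) := by
  apply LinearMap.ext; intro c
  induction c using TensorProduct.induction_on with
  | zero => simp
  | add u v hu hv => simp only [map_add, hu, hv]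
  | tmul x y =>
    set rx := Repr.arb ℂ x with hrx
    set ry := Repr.arb ℂ y with hry
    rw [conv_tmul _ _ rx ry, cunit_apply, counitC_tmul]
    calc ∑ i ∈ rx.index, ∑ j ∈ ry.index,
          (qy LinearMap.id) (rx.left i ⊗ₜ[ℂ] ry.left j) * (qy S) (rx.right i ⊗ₜ[ℂ] ry.right j)
        = ∑ i ∈ rx.index, ∑ j ∈ ry.index,
            (ε (rx.left i) * ε (rx.right i)) • (ry.left j * S (ry.right j)) := by
          refine Finset.sum_congr rfl fun i _ => Finset.sum_congr rfl fun j _ => ?_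
          rw [qy_tmul, qy_tmul, LinearMap.id_apply, smul_mul_assoc, mul_smul_comm, smul_smul]
      _ = ∑ i ∈ rx.index, (ε (rx.left i) * ε (rx.right i)) • (ε y • (1:H)) := by
          refine Finset.sum_congr rfl fun i _ => ?_
          rw [← Finset.smul_sum, sum_mul_S ry]
      _ = (ε x * ε y) • (1 : H) := by
          rw [← Finset.sum_smul, sum_counit_counit rx, smul_smul]

lemma mapSS_decomp : (TensorProduct.map S S : H ⊗[ℂ] H →ₗ[ℂ] H ⊗[ℂ] H)
    = LinearMap.rTensor H S ∘ₗ LinearMap.lTensor H S := by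
  apply TensorProduct.ext'
  intro x y
  simp

lemma lift_comp_S (ρ : H →ₗ[ℂ] H →ₗ[ℂ] H) :
    TensorProduct.lift (ρ ∘ₗ S) = TensorProduct.lift ρ ∘ₗ LinearMap.rTensor H S := by
  apply TensorProduct.ext'
  intro x y
  simp

/-- Main Fox expansion: `ρ(Sx, Sy) = Σ S(x₁) ρ(x₂, y₁) S(y₂)` as convolution identity. -/
lemma foxMain (ρ : H →ₗ[ℂ] H →ₗ[ℂ] H) (hρ : IsFoxPairing ρ) :
    TensorProduct.lift ρ ∘ₗ TensorProduct.map S S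
      = conv (conv (px S) (TensorProduct.lift ρ)) (qy S) := by
  have hcoaC' : ∀ c : H ⊗[ℂ] H, (TensorProduct.assoc ℂ (H ⊗[ℂ] H) (H ⊗[ℂ] H) (H ⊗[ℂ] H))
      ((CoalgebraStruct.comul (R := ℂ)).rTensor _ (CoalgebraStruct.comul c))
        = (CoalgebraStruct.comul (R := ℂ)).lTensor _ (CoalgebraStruct.comul c) := coassocC
  have E2ρ := foxE2 ρ hρ.1 (fox_one_left ρ hρ.1)
  have step2 : TensorProduct.lift ρ ∘ₗ LinearMap.rTensor H S
      = -(conv (px S) (TensorProduct.lift ρ)) := by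
    calc TensorProduct.lift ρ ∘ₗ LinearMap.rTensor H S
        = conv cunit (TensorProduct.lift ρ ∘ₗ LinearMap.rTensor H S) :=
          (conv_cunit_left counitLC _).symm
      _ = conv (conv (px S) (px LinearMap.id)) (TensorProduct.lift ρ ∘ₗ LinearMap.rTensor H S) := by
          rw [conv_pxS_pxid]
      _ = conv (px S) (conv (px LinearMap.id) (TensorProduct.lift ρ ∘ₗ LinearMap.rTensor H S)) :=
          conv_assoc hcoaC' _ _ _
      _ = conv (px S) (-(TensorProduct.lift ρ)) := by rw [E2ρ]
      _ = -(conv (px S) (TensorProduct.lift ρ)) := conv_neg_right _ _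
  have hRFψ : ∀ a b c : H, (ρ ∘ₗ S) c (a * b) = (ρ ∘ₗ S) c a * b + ε a • (ρ ∘ₗ S) c b := by
    intro a b c
    exact hρ.2 a b (S c)
  have E1ψ := foxE1 (ρ ∘ₗ S) hRFψ (fox_one_right (ρ ∘ₗ S) hRFψ)
  rw [lift_comp_S] at E1ψ
  have hcomp : (TensorProduct.lift ρ ∘ₗ LinearMap.rTensor H S) ∘ₗ LinearMap.lTensor H S
      = TensorProduct.lift ρ ∘ₗ TensorProduct.map S S := by
    rw [mapSS_decomp, LinearMap.comp_assoc]
  rw [hcomp, step2, neg_neg] at E1ψ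
  calc TensorProduct.lift ρ ∘ₗ TensorProduct.map S S
      = conv (TensorProduct.lift ρ ∘ₗ TensorProduct.map S S) cunit :=
        (conv_cunit_right counitRC _).symm
    _ = conv (TensorProduct.lift ρ ∘ₗ TensorProduct.map S S) (conv (qy LinearMap.id) (qy S)) := by
        rw [conv_qyid_qyS]
    _ = conv (conv (TensorProduct.lift ρ ∘ₗ TensorProduct.map S S) (qy LinearMap.id)) (qy S) :=
        (conv_assoc hcoaC' _ _ _).symm
    _ = conv (conv (px S) (TensorProduct.lift ρ)) (qy S) := by rw [E1ψ]

end Fox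

/-! ### Part 5: the algebra `H ⊗ Hᵐᵒᵖ` and twist maps -/

section Atwo

/-- `op` as a linear map -/
def opL : H →ₗ[ℂ] Hᵐᵒᵖ := (MulOpposite.opLinearEquiv ℂ).toLinearMap

/-- `unop` as a linear map -/
def unopL : Hᵐᵒᵖ →ₗ[ℂ] H := (MulOpposite.opLinearEquiv ℂ).symm.toLinearMap

@[simp] lemma opL_apply (x : H) : opL x = MulOpposite.op x := rfl
@[simp] lemma unopL_apply (x : Hᵐᵒᵖ) : unopL x = MulOpposite.unop x := rfl

/-- `id ⊗ op` -/
def θ : H ⊗[ℂ] H →ₗ[ℂ] H ⊗[ℂ] Hᵐᵒᵖ := TensorProduct.map LinearMap.id opL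

/-- `id ⊗ unop` -/
def unθ : H ⊗[ℂ] Hᵐᵒᵖ →ₗ[ℂ] H ⊗[ℂ] H := TensorProduct.map LinearMap.id unopL

@[simp] lemma θ_tmul (x y : H) : θ (x ⊗ₜ[ℂ] y) = x ⊗ₜ[ℂ] MulOpposite.op y := rfl
@[simp] lemma unθ_tmul (x : H) (y : Hᵐᵒᵖ) : unθ (x ⊗ₜ[ℂ] y) = x ⊗ₜ[ℂ] MulOpposite.unop y := rfl

lemma unθ_θ (z : H ⊗[ℂ] H) : unθ (θ z) = z := by
  induction z using TensorProduct.induction_on with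
  | zero => simp
  | add u v hu hv => simp only [map_add, hu, hv]
  | tmul x y => simp

/-- the "antipode" on `H ⊗ Hᵐᵒᵖ` -/
def S₂ : H ⊗[ℂ] Hᵐᵒᵖ →ₗ[ℂ] H ⊗[ℂ] Hᵐᵒᵖ := TensorProduct.map S (opL ∘ₗ S ∘ₗ unopL)

@[simp] lemma S₂_tmul (x : H) (y : Hᵐᵒᵖ) :
    S₂ (x ⊗ₜ[ℂ] y) = S x ⊗ₜ[ℂ] MulOpposite.op (S (MulOpposite.unop y)) := rfl

/-- the flip on `H ⊗ Hᵐᵒᵖ` -/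
def flip₂ : H ⊗[ℂ] Hᵐᵒᵖ →ₗ[ℂ] H ⊗[ℂ] Hᵐᵒᵖ :=
  (TensorProduct.map unopL opL) ∘ₗ (TensorProduct.comm ℂ H Hᵐᵒᵖ).toLinearMap

@[simp] lemma flip₂_tmul (x : H) (y : Hᵐᵒᵖ) :
    flip₂ (x ⊗ₜ[ℂ] y) = MulOpposite.unop y ⊗ₜ[ℂ] MulOpposite.op x := rfl

lemma S₂_antimul (P Q : H ⊗[ℂ] Hᵐᵒᵖ) : S₂ (P * Q) = S₂ Q * S₂ P := by
  induction P using TensorProduct.induction_on with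
  | zero => simp
  | add u v hu hv => simp only [add_mul, map_add, hu, hv, mul_add]
  | tmul p u =>
    induction Q using TensorProduct.induction_on with
    | zero => simp
    | add u' v' hu hv => simp only [mul_add, map_add, hu, hv, add_mul]
    | tmul r v =>
      simp only [Algebra.TensorProduct.tmul_mul_tmul, S₂_tmul, MulOpposite.unop_mul,
        S_antimul, MulOpposite.op_mul]

lemma flip₂_antimul (P Q : H ⊗[ℂ] Hᵐᵒᵖ) : flip₂ (P * Q) = flip₂ Q * flip₂ P := by
  induction P using TensorProduct.induction_on with
  | zero => simp
  | add u v hu hv => simp only [add_mul, map_add, hu, hv, mul_add]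
  | tmul p u =>
    induction Q using TensorProduct.induction_on with
    | zero => simp
    | add u' v' hu hv => simp only [mul_add, map_add, hu, hv, add_mul]
    | tmul r v =>
      simp only [Algebra.TensorProduct.tmul_mul_tmul, flip₂_tmul, MulOpposite.unop_mul,
        MulOpposite.op_mul]

/-- `x ↦ x ⊗ op 1` -/
def i₁ : H →ₗ[ℂ] H ⊗[ℂ] Hᵐᵒᵖ := (TensorProduct.mk ℂ H Hᵐᵒᵖ).flip (MulOpposite.op 1)

/-- `y ↦ 1 ⊗ op y` -/
def i₂ : H →ₗ[ℂ] H ⊗[ℂ] Hᵐᵒᵖ := (TensorProduct.mk ℂ H Hᵐᵒᵖ 1) ∘ₗ opL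

@[simp] lemma i₁_apply (x : H) : i₁ x = x ⊗ₜ[ℂ] MulOpposite.op 1 := rfl
@[simp] lemma i₂_apply (y : H) : i₂ y = 1 ⊗ₜ[ℂ] MulOpposite.op y := rfl

/-- the algebra morphism `x ↦ x₁ ⊗ op (S x₂)` -/
def chat : H →ₗ[ℂ] H ⊗[ℂ] Hᵐᵒᵖ :=
  (TensorProduct.map LinearMap.id (opL ∘ₗ S)) ∘ₗ Coalgebra.comul

lemma mapidopS_mul (P Q : H ⊗[ℂ] H) :
    (TensorProduct.map LinearMap.id (opL ∘ₗ S)) (P * Q)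
      = (TensorProduct.map LinearMap.id (opL ∘ₗ S)) P
        * (TensorProduct.map LinearMap.id (opL ∘ₗ S)) Q := by
  induction P using TensorProduct.induction_on with
  | zero => simp
  | add u v hu hv => simp only [add_mul, map_add, hu, hv]
  | tmul p u =>
    induction Q using TensorProduct.induction_on with
    | zero => simp
    | add u' v' hu hv => simp only [mul_add, map_add, hu, hv]
    | tmul r v =>
      simp only [Algebra.TensorProduct.tmul_mul_tmul, TensorProduct.map_tmul,
        LinearMap.comp_apply, LinearMap.id_apply, opL_apply, S_antimul, MulOpposite.op_mul]

lemma chat_mul (u v : H) : chat (u * v) = chat u * chat v := by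
  simp only [chat, LinearMap.comp_apply, Bialgebra.comul_mul, mapidopS_mul]

/-- composing with `px`/`qy` -/
lemma comp_px {M N : Type*} [AddCommMonoid M] [Module ℂ M] [AddCommMonoid N] [Module ℂ N]
    (φ : M →ₗ[ℂ] N) (F : H →ₗ[ℂ] M) : φ ∘ₗ px F = px (φ ∘ₗ F) := by
  apply TensorProduct.ext'
  intro x y
  simp

lemma comp_qy {M N : Type*} [AddCommMonoid M] [Module ℂ M] [AddCommMonoid N] [Module ℂ N]
    (φ : M →ₗ[ℂ] N) (G : H →ₗ[ℂ] M) : φ ∘ₗ qy G = qy (φ ∘ₗ G) := by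
  apply TensorProduct.ext'
  intro x y
  simp

lemma px_precomp_SS {M : Type*} [AddCommMonoid M] [Module ℂ M] (F : H →ₗ[ℂ] M) :
    px F ∘ₗ TensorProduct.map S S = px (F ∘ₗ S) := by
  apply TensorProduct.ext'
  intro x y
  simp [counit_S]

lemma qy_precomp_SS {M : Type*} [AddCommMonoid M] [Module ℂ M] (G : H →ₗ[ℂ] M) :
    qy G ∘ₗ TensorProduct.map S S = qy (G ∘ₗ S) := by
  apply TensorProduct.ext'
  intro x y
  simp [counit_S]

lemma S₂_i₁ : S₂ ∘ₗ i₁ = i₁ ∘ₗ (S : H →ₗ[ℂ] H) := by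
  refine LinearMap.ext fun x => ?_
  simp [S_one]

lemma S₂_i₂ : S₂ ∘ₗ i₂ = i₂ ∘ₗ (S : H →ₗ[ℂ] H) := by
  refine LinearMap.ext fun x => ?_
  simp [S_one]

lemma flip₂_i₁ : flip₂ ∘ₗ i₁ = (i₂ : H →ₗ[ℂ] H ⊗[ℂ] Hᵐᵒᵖ) := by
  refine LinearMap.ext fun x => ?_
  simp

lemma flip₂_i₂ : flip₂ ∘ₗ i₂ = (i₁ : H →ₗ[ℂ] H ⊗[ℂ] Hᵐᵒᵖ) := by
  refine LinearMap.ext fun x => ?_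
  simp

lemma i₂_i₁_comm (a b : H) : i₂ a * i₁ b = i₁ b * i₂ a := by
  simp [Algebra.TensorProduct.tmul_mul_tmul]

/-- `S₂ ∘ (S ⊗ opL) ∘ Δ = ĉ` -/
lemma S₂_mapSopL (hinv : IsInvolutive H) :
    S₂ ∘ₗ ((TensorProduct.map S opL) ∘ₗ (Coalgebra.comul (R := ℂ) (A := H))) = chat := by
  apply LinearMap.ext; intro x
  set r := Repr.arb ℂ x with hr
  show S₂ ((TensorProduct.map S opL) (Coalgebra.comul (R := ℂ) x)) = chat x
  rw [chat, LinearMap.comp_apply, ← r.eq]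
  rw [map_sum, map_sum, map_sum]
  refine Finset.sum_congr rfl fun i _ => ?_
  simp [hinv (r.left i)]

/-- `flip₂ ∘ (S ⊗ opL) ∘ Δ = ĉ` -/
lemma flip₂_mapSopL (hco : IsCocomm H) :
    flip₂ ∘ₗ ((TensorProduct.map S opL) ∘ₗ (Coalgebra.comul (R := ℂ) (A := H))) = chat := by
  apply LinearMap.ext; intro x
  set r := Repr.arb ℂ x with hr
  show flip₂ ((TensorProduct.map S opL) (Coalgebra.comul (R := ℂ) x)) = chat x
  rw [chat, LinearMap.comp_apply, ← r.eq]
  rw [map_sum, map_sum, map_sum]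
  have hswap := swap_sum hco ((TensorProduct.mk ℂ H Hᵐᵒᵖ).flip ∘ₗ (opL ∘ₗ S)) r
  calc ∑ i ∈ r.index, flip₂ ((TensorProduct.map S opL) (r.left i ⊗ₜ[ℂ] r.right i))
      = ∑ i ∈ r.index, ((TensorProduct.mk ℂ H Hᵐᵒᵖ).flip ∘ₗ (opL ∘ₗ S)) (r.left i) (r.right i) := by
        refine Finset.sum_congr rfl fun i _ => ?_
        simp
    _ = ∑ i ∈ r.index, ((TensorProduct.mk ℂ H Hᵐᵒᵖ).flip ∘ₗ (opL ∘ₗ S)) (r.right i) (r.left i) :=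
        hswap
    _ = ∑ i ∈ r.index, (TensorProduct.map LinearMap.id (opL ∘ₗ S)) (r.left i ⊗ₜ[ℂ] r.right i) := by
        refine Finset.sum_congr rfl fun i _ => ?_
        simp

/-- `comul` on the tensor square commutes with `S ⊗ S` -/
lemma comulC_precomp_SS (hco : IsCocomm H) (c : H ⊗[ℂ] H) :
    CoalgebraStruct.comul (R := ℂ) ((TensorProduct.map S S) c)
      = TensorProduct.map (TensorProduct.map S S) (TensorProduct.map S S)
          (CoalgebraStruct.comul (R := ℂ) c) := by
  induction c using TensorProduct.induction_on with
  | zero => simp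
  | add u v hu hv => simp only [map_add, hu, hv]
  | tmul x y =>
    show (TensorProduct.tensorTensorTensorComm ℂ H H H H)
        ((Coalgebra.comul (R := ℂ) (S x)) ⊗ₜ[ℂ] (Coalgebra.comul (R := ℂ) (S y))) = _
    rw [comul_S_apply hco x, comul_S_apply hco y]
    have key : ∀ (X Y : H ⊗[ℂ] H),
        (TensorProduct.tensorTensorTensorComm ℂ H H H H)
            ((TensorProduct.map S S X) ⊗ₜ[ℂ] (TensorProduct.map S S Y))
          = TensorProduct.map (TensorProduct.map S S) (TensorProduct.map S S)
              ((TensorProduct.tensorTensorTensorComm ℂ H H H H) (X ⊗ₜ[ℂ] Y)) := by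
      intro X Y
      induction X using TensorProduct.induction_on with
      | zero => simp
      | add u v hu hv => simp only [map_add, TensorProduct.add_tmul, hu, hv]
      | tmul x1 x2 =>
        induction Y using TensorProduct.induction_on with
        | zero => simp
        | add u v hu hv => simp only [map_add, TensorProduct.tmul_add, hu, hv]
        | tmul y1 y2 => simp [TensorProduct.tensorTensorTensorComm_tmul]
    exact key _ _

end Atwo

/-! ### Part 6: the double bracket as a convolution word -/

section Word

variable (ρ : H →ₗ[ℂ] H →ₗ[ℂ] H)

/-- `(x,y) ↦ (S ⊗ opL)(Δ ρ(x,y))` -/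
def B₂ : H ⊗[ℂ] H →ₗ[ℂ] H ⊗[ℂ] Hᵐᵒᵖ :=
  (TensorProduct.map S opL) ∘ₗ (Coalgebra.comul (R := ℂ) (A := H)) ∘ₗ ρT ρ

lemma B₂_tmul (u v : H) :
    B₂ ρ (u ⊗ₜ[ℂ] v) = (TensorProduct.map S opL) (Coalgebra.comul (R := ℂ) (ρT ρ (u ⊗ₜ[ℂ] v))) :=
  rfl

lemma firstFac_tmul (x y z : H) : firstFac ((x ⊗ₜ[ℂ] y) ⊗ₜ[ℂ] z) = y * S z * x := by
  simp [firstFac, mulH, LinearMap.mul'_apply]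

lemma aux_firstFac (u v : H) (T : H ⊗[ℂ] H) :
    (TensorProduct.map firstFac LinearMap.id)
        ((TensorProduct.assoc ℂ (H ⊗[ℂ] H) H H).symm ((u ⊗ₜ[ℂ] v) ⊗ₜ[ℂ] T))
      = (TensorProduct.map (LinearMap.mulLeft ℂ v ∘ₗ LinearMap.mulRight ℂ u ∘ₗ S)
          LinearMap.id) T := by
  induction T using TensorProduct.induction_on with
  | zero => simp
  | add a b ha hb => simp only [TensorProduct.tmul_add, map_add, ha, hb]
  | tmul z w =>
    rw [TensorProduct.assoc_symm_tmul]
    rw [TensorProduct.map_tmul, TensorProduct.map_tmul]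
    rw [firstFac_tmul]
    simp [mul_assoc]

lemma θ_maprT (f : H →ₗ[ℂ] H) (T : H ⊗[ℂ] H) :
    θ ((TensorProduct.map f LinearMap.id) T) = (TensorProduct.map f opL) T := by
  induction T using TensorProduct.induction_on with
  | zero => simp
  | add a b ha hb => simp only [map_add, ha, hb]
  | tmul z w => simp

lemma triple_prod (p q : H) (T : H ⊗[ℂ] H) :
    i₁ p * ((TensorProduct.map S opL) T * i₁ q)
      = (TensorProduct.map (LinearMap.mulLeft ℂ p ∘ₗ LinearMap.mulRight ℂ q ∘ₗ S) opL) T := by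
  induction T using TensorProduct.induction_on with
  | zero => simp
  | add a b ha hb => simp only [map_add, add_mul, mul_add, ha, hb]
  | tmul z w =>
    simp only [TensorProduct.map_tmul, i₁_apply, Algebra.TensorProduct.tmul_mul_tmul,
      LinearMap.comp_apply, LinearMap.mulLeft_apply, LinearMap.mulRight_apply, opL_apply,
      LinearMap.id_apply]
    rw [MulOpposite.op_one, one_mul, mul_one]

lemma inner_eval {x y : H} (rx : Repr ℂ x) :
    conv (B₂ ρ) (px i₁) (x ⊗ₜ[ℂ] y)
      = ∑ i ∈ rx.index, B₂ ρ (rx.left i ⊗ₜ[ℂ] y) * i₁ (rx.right i) := by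
  set ry := Repr.arb ℂ y with hry
  rw [conv_tmul _ _ rx ry]
  calc ∑ i ∈ rx.index, ∑ j ∈ ry.index,
        B₂ ρ (rx.left i ⊗ₜ[ℂ] ry.left j) * (px i₁) (rx.right i ⊗ₜ[ℂ] ry.right j)
      = ∑ i ∈ rx.index, ∑ j ∈ ry.index, ε (ry.right j) •
          ((LinearMap.mulRight ℂ (i₁ (rx.right i)) ∘ₗ B₂ ρ ∘ₗ
            (TensorProduct.mk ℂ H H (rx.left i))) (ry.left j)) := by
        refine Finset.sum_congr rfl fun i _ => Finset.sum_congr rfl fun j _ => ?_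
        rw [px_tmul]
        rw [mul_smul_comm]
        rfl
    _ = ∑ i ∈ rx.index, B₂ ρ (rx.left i ⊗ₜ[ℂ] y) * i₁ (rx.right i) := by
        refine Finset.sum_congr rfl fun i _ => ?_
        rw [sum_counit_right_smul ry (LinearMap.mulRight ℂ (i₁ (rx.right i)) ∘ₗ B₂ ρ ∘ₗ
            (TensorProduct.mk ℂ H H (rx.left i)))]
        rfl

lemma word_eval {x y : H} (rx : Repr ℂ x) (ry : Repr ℂ y) :
    conv (qy i₁) (conv (B₂ ρ) (px i₁)) (x ⊗ₜ[ℂ] y)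
      = ∑ j ∈ ry.index, ∑ i ∈ rx.index,
          i₁ (ry.left j) * (B₂ ρ (rx.left i ⊗ₜ[ℂ] ry.right j) * i₁ (rx.right i)) := by
  rw [conv_tmul _ _ rx ry]
  calc ∑ i ∈ rx.index, ∑ j ∈ ry.index,
        (qy i₁) (rx.left i ⊗ₜ[ℂ] ry.left j)
          * (conv (B₂ ρ) (px i₁)) (rx.right i ⊗ₜ[ℂ] ry.right j)
      = ∑ j ∈ ry.index, ∑ i ∈ rx.index, ε (rx.left i) •
          ((LinearMap.mulLeft ℂ (i₁ (ry.left j)) ∘ₗ (conv (B₂ ρ) (px i₁)) ∘ₗ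
            ((TensorProduct.mk ℂ H H).flip (ry.right j))) (rx.right i)) := by
        rw [Finset.sum_comm]
        refine Finset.sum_congr rfl fun j _ => Finset.sum_congr rfl fun i _ => ?_
        rw [qy_tmul]
        rw [smul_mul_assoc]
        rfl
    _ = ∑ j ∈ ry.index, i₁ (ry.left j) * (conv (B₂ ρ) (px i₁)) (x ⊗ₜ[ℂ] ry.right j) := by
        refine Finset.sum_congr rfl fun j _ => ?_
        rw [sum_counit_left_smul rx (LinearMap.mulLeft ℂ (i₁ (ry.left j)) ∘ₗ
          (conv (B₂ ρ) (px i₁)) ∘ₗ ((TensorProduct.mk ℂ H H).flip (ry.right j)))]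
        rfl
    _ = ∑ j ∈ ry.index, ∑ i ∈ rx.index,
          i₁ (ry.left j) * (B₂ ρ (rx.left i ⊗ₜ[ℂ] ry.right j) * i₁ (rx.right i)) := by
        refine Finset.sum_congr rfl fun j _ => ?_
        rw [inner_eval ρ rx, Finset.mul_sum]

/-- the double bracket as a convolution word -/
lemma W1 (hco : IsCocomm H) :
    θ ∘ₗ dbrMap ρ = conv (qy i₁) (conv (B₂ ρ) (px i₁)) := by
  apply LinearMap.ext; intro c
  induction c using TensorProduct.induction_on with
  | zero => simp
  | add u v hu hv => simp only [map_add, hu, hv]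
  | tmul x y =>
    set rx := Repr.arb ℂ x with hrx
    set ry := Repr.arb ℂ y with hry
    have hdbr : dbrMap ρ (x ⊗ₜ[ℂ] y) = ∑ j ∈ ry.index, ∑ i ∈ rx.index,
        (TensorProduct.map (LinearMap.mulLeft ℂ (ry.left j) ∘ₗ
            LinearMap.mulRight ℂ (rx.right i) ∘ₗ S) LinearMap.id)
          (Coalgebra.comul (R := ℂ) (ρT ρ (rx.left i ⊗ₜ[ℂ] ry.right j))) := by
      show (TensorProduct.map firstFac LinearMap.id)
        ((TensorProduct.assoc ℂ (H ⊗[ℂ] H) H H).symm.toLinearMap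
          ((TensorProduct.map LinearMap.id (Δ ∘ₗ ρT ρ))
            ((TensorProduct.tensorTensorTensorComm ℂ H H H H).toLinearMap
              ((TensorProduct.map Δ Δ) (x ⊗ₜ[ℂ] y))))) = _
      rw [TensorProduct.map_tmul]
      rw [show Δ (H := H) x = ∑ i ∈ rx.index, rx.right i ⊗ₜ[ℂ] rx.left i from
        ((reprSwap hco rx).eq).symm]
      rw [show Δ (H := H) y = ∑ j ∈ ry.index, ry.left j ⊗ₜ[ℂ] ry.right j from (ry.eq).symm]
      simp only [TensorProduct.sum_tmul, TensorProduct.tmul_sum, map_sum]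
      refine Finset.sum_congr rfl fun j _ => Finset.sum_congr rfl fun i _ => ?_
      simp only [LinearEquiv.coe_coe]
      rw [TensorProduct.tensorTensorTensorComm_tmul, TensorProduct.map_tmul,
        LinearMap.id_apply]
      have := aux_firstFac (rx.right i) (ry.left j)
        ((Δ ∘ₗ ρT ρ) (rx.left i ⊗ₜ[ℂ] ry.right j))
      simp only [LinearMap.comp_apply, Δ] at this ⊢
      exact this
    rw [LinearMap.comp_apply, hdbr, map_sum]
    rw [word_eval ρ rx ry]
    refine Finset.sum_congr rfl fun j _ => ?_
    rw [map_sum]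
    refine Finset.sum_congr rfl fun i _ => ?_
    rw [θ_maprT, B₂_tmul, triple_prod]

end Word

/-! ### Part 7: final assembly -/

section Final

variable (ρ : H →ₗ[ℂ] H →ₗ[ℂ] H)

lemma chat_S (hco : IsCocomm H) (hinv : IsInvolutive H) (x : H) {r : Repr ℂ x} :
    chat (S x) = ∑ i ∈ r.index, S (r.left i) ⊗ₜ[ℂ] MulOpposite.op (r.right i) := by
  rw [chat, LinearMap.comp_apply, comul_S_apply hco, ← r.eq, map_sum, map_sum]
  refine Finset.sum_congr rfl fun i _ => ?_
  simp [hinv (r.right i)]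

lemma px_chatS (hco : IsCocomm H) (hinv : IsInvolutive H) :
    px (chat ∘ₗ S) = conv (px ((i₁ : H →ₗ[ℂ] H ⊗[ℂ] Hᵐᵒᵖ) ∘ₗ S)) (px i₂) := by
  apply LinearMap.ext; intro c
  induction c using TensorProduct.induction_on with
  | zero => simp
  | add u v hu hv => simp only [map_add, hu, hv]
  | tmul x y =>
    set rx := Repr.arb ℂ x with hrx
    set ry := Repr.arb ℂ y with hry
    rw [conv_tmul _ _ rx ry, px_tmul]
    rw [LinearMap.comp_apply, chat_S hco hinv x (r := rx)]
    symm
    calc ∑ i ∈ rx.index, ∑ j ∈ ry.index,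
          (px (i₁ ∘ₗ S)) (rx.left i ⊗ₜ[ℂ] ry.left j) * (px i₂) (rx.right i ⊗ₜ[ℂ] ry.right j)
        = ∑ i ∈ rx.index, ∑ j ∈ ry.index, (ε (ry.left j) * ε (ry.right j)) •
            (S (rx.left i) ⊗ₜ[ℂ] MulOpposite.op (rx.right i)) := by
          refine Finset.sum_congr rfl fun i _ => Finset.sum_congr rfl fun j _ => ?_
          rw [px_tmul, px_tmul, smul_mul_assoc, mul_smul_comm, smul_smul]
          congr 1
          simp [Algebra.TensorProduct.tmul_mul_tmul]
      _ = ∑ i ∈ rx.index, ε y • (S (rx.left i) ⊗ₜ[ℂ] MulOpposite.op (rx.right i)) := by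
          refine Finset.sum_congr rfl fun i _ => ?_
          rw [← Finset.sum_smul, sum_counit_counit ry]
      _ = ε y • ∑ i ∈ rx.index, S (rx.left i) ⊗ₜ[ℂ] MulOpposite.op (rx.right i) := by
          rw [Finset.smul_sum]

lemma qy_chatS (hco : IsCocomm H) (hinv : IsInvolutive H) :
    qy (chat ∘ₗ S) = conv (qy ((i₁ : H →ₗ[ℂ] H ⊗[ℂ] Hᵐᵒᵖ) ∘ₗ S)) (qy i₂) := by
  apply LinearMap.ext; intro c
  induction c using TensorProduct.induction_on with
  | zero => simp
  | add u v hu hv => simp only [map_add, hu, hv]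
  | tmul x y =>
    set rx := Repr.arb ℂ x with hrx
    set ry := Repr.arb ℂ y with hry
    rw [conv_tmul _ _ rx ry, qy_tmul]
    rw [LinearMap.comp_apply, chat_S hco hinv y (r := ry)]
    symm
    calc ∑ i ∈ rx.index, ∑ j ∈ ry.index,
          (qy (i₁ ∘ₗ S)) (rx.left i ⊗ₜ[ℂ] ry.left j) * (qy i₂) (rx.right i ⊗ₜ[ℂ] ry.right j)
        = ∑ i ∈ rx.index, (ε (rx.left i) * ε (rx.right i)) •
            ∑ j ∈ ry.index, (S (ry.left j) ⊗ₜ[ℂ] MulOpposite.op (ry.right j)) := by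
          refine Finset.sum_congr rfl fun i _ => ?_
          rw [Finset.smul_sum]
          refine Finset.sum_congr rfl fun j _ => ?_
          rw [qy_tmul, qy_tmul, smul_mul_assoc, mul_smul_comm, smul_smul]
          congr 1
          simp [Algebra.TensorProduct.tmul_mul_tmul]
      _ = ε x • ∑ j ∈ ry.index, (S (ry.left j) ⊗ₜ[ℂ] MulOpposite.op (ry.right j)) := by
          rw [← Finset.sum_smul, sum_counit_counit rx]

lemma conv_P3_P4 (hco : IsCocomm H) :
    conv (px ((i₂ : H →ₗ[ℂ] H ⊗[ℂ] Hᵐᵒᵖ) ∘ₗ S)) (px i₂) = cunit := by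
  apply LinearMap.ext; intro c
  induction c using TensorProduct.induction_on with
  | zero => simp
  | add u v hu hv => simp only [map_add, hu, hv]
  | tmul x y =>
    set rx := Repr.arb ℂ x with hrx
    set ry := Repr.arb ℂ y with hry
    rw [conv_tmul _ _ rx ry, cunit_apply, counitC_tmul]
    calc ∑ i ∈ rx.index, ∑ j ∈ ry.index,
          (px (i₂ ∘ₗ S)) (rx.left i ⊗ₜ[ℂ] ry.left j) * (px i₂) (rx.right i ⊗ₜ[ℂ] ry.right j)
        = ∑ i ∈ rx.index, ∑ j ∈ ry.index, (ε (ry.left j) * ε (ry.right j)) •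
            ((1:H) ⊗ₜ[ℂ] MulOpposite.op (rx.right i * S (rx.left i))) := by
          refine Finset.sum_congr rfl fun i _ => Finset.sum_congr rfl fun j _ => ?_
          rw [px_tmul, px_tmul, smul_mul_assoc, mul_smul_comm, smul_smul]
          congr 1
          simp [Algebra.TensorProduct.tmul_mul_tmul, MulOpposite.op_mul]
      _ = ∑ i ∈ rx.index, ε y • ((1:H) ⊗ₜ[ℂ] MulOpposite.op (rx.right i * S (rx.left i))) := by
          refine Finset.sum_congr rfl fun i _ => ?_
          rw [← Finset.sum_smul, sum_counit_counit ry]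
      _ = ε y • ((1:H) ⊗ₜ[ℂ] MulOpposite.op (∑ i ∈ rx.index, rx.right i * S (rx.left i))) := by
          rw [← Finset.smul_sum, ← TensorProduct.tmul_sum, ← Finset.op_sum]
      _ = (ε x * ε y) • (1 : H ⊗[ℂ] Hᵐᵒᵖ) := by
          rw [sum_mul_S' hco rx]
          rw [MulOpposite.op_smul, TensorProduct.tmul_smul, smul_smul, mul_comm (ε y) (ε x)]
          rw [Algebra.TensorProduct.one_def]
          rfl

lemma conv_Q4_Q3 (hco : IsCocomm H) :
    conv (qy (i₂ : H →ₗ[ℂ] H ⊗[ℂ] Hᵐᵒᵖ)) (qy (i₂ ∘ₗ S)) = cunit := by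
  apply LinearMap.ext; intro c
  induction c using TensorProduct.induction_on with
  | zero => simp
  | add u v hu hv => simp only [map_add, hu, hv]
  | tmul x y =>
    set rx := Repr.arb ℂ x with hrx
    set ry := Repr.arb ℂ y with hry
    rw [conv_tmul _ _ rx ry, cunit_apply, counitC_tmul]
    calc ∑ i ∈ rx.index, ∑ j ∈ ry.index,
          (qy i₂) (rx.left i ⊗ₜ[ℂ] ry.left j) * (qy (i₂ ∘ₗ S)) (rx.right i ⊗ₜ[ℂ] ry.right j)
        = ∑ i ∈ rx.index, (ε (rx.left i) * ε (rx.right i)) •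
            ∑ j ∈ ry.index, ((1:H) ⊗ₜ[ℂ] MulOpposite.op (S (ry.right j) * ry.left j)) := by
          refine Finset.sum_congr rfl fun i _ => ?_
          rw [Finset.smul_sum]
          refine Finset.sum_congr rfl fun j _ => ?_
          rw [qy_tmul, qy_tmul, smul_mul_assoc, mul_smul_comm, smul_smul]
          congr 1
          simp [Algebra.TensorProduct.tmul_mul_tmul, MulOpposite.op_mul]
      _ = ε x • ((1:H) ⊗ₜ[ℂ] MulOpposite.op (∑ j ∈ ry.index, S (ry.right j) * ry.left j)) := by
          rw [← Finset.sum_smul, sum_counit_counit rx, ← TensorProduct.tmul_sum,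
            ← Finset.op_sum]
      _ = (ε x * ε y) • (1 : H ⊗[ℂ] Hᵐᵒᵖ) := by
          rw [sum_S_mul' hco ry]
          rw [MulOpposite.op_smul, TensorProduct.tmul_smul, smul_smul]
          rw [Algebra.TensorProduct.one_def]
          rfl

lemma main_map (hco : IsCocomm H) (hinv : IsInvolutive H) (hρ : IsFoxPairing ρ) :
    S₂ ∘ₗ (θ ∘ₗ dbrMap ρ)
      = flip₂ ∘ₗ ((θ ∘ₗ dbrMap ρ) ∘ₗ TensorProduct.map S S) := by
  have hccC : ∀ c : H ⊗[ℂ] H, (TensorProduct.comm ℂ (H ⊗[ℂ] H) (H ⊗[ℂ] H))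
      (CoalgebraStruct.comul (R := ℂ) c) = CoalgebraStruct.comul (R := ℂ) c := cocommC hco
  have ca := conv_assoc (coassocC (H := H)) (A := H ⊗[ℂ] Hᵐᵒᵖ)
  have cl := conv_cunit_left (counitLC (H := H)) (A := H ⊗[ℂ] Hᵐᵒᵖ)
  have cr := conv_cunit_right (counitRC (H := H)) (A := H ⊗[ℂ] Hᵐᵒᵖ)
  -- the left-hand side
  have e3 : S₂ ∘ₗ B₂ ρ = chat ∘ₗ ρT ρ := by
    show (S₂ ∘ₗ ((TensorProduct.map S opL) ∘ₗ (Coalgebra.comul (R := ℂ) (A := H)))) ∘ₗ ρT ρ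
      = chat ∘ₗ ρT ρ
    rw [S₂_mapSopL hinv]
  have hLHS : S₂ ∘ₗ (θ ∘ₗ dbrMap ρ)
      = conv (conv (px (i₁ ∘ₗ S)) (chat ∘ₗ ρT ρ)) (qy (i₁ ∘ₗ S)) := by
    rw [W1 ρ hco]
    rw [antihom_conv hccC S₂ S₂_antimul (qy i₁) (conv (B₂ ρ) (px i₁))]
    rw [antihom_conv hccC S₂ S₂_antimul (B₂ ρ) (px i₁)]
    rw [comp_px, comp_qy, S₂_i₁, e3]
  -- the right-hand side
  have f2 : flip₂ ∘ₗ (i₁ ∘ₗ S) = (i₂ : H →ₗ[ℂ] H ⊗[ℂ] Hᵐᵒᵖ) ∘ₗ S := by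
    rw [← LinearMap.comp_assoc, flip₂_i₁]
  have f4 : flip₂ ∘ₗ (B₂ ρ ∘ₗ TensorProduct.map S S)
      = chat ∘ₗ (ρT ρ ∘ₗ TensorProduct.map S S) := by
    show (flip₂ ∘ₗ ((TensorProduct.map S opL) ∘ₗ (Coalgebra.comul (R := ℂ) (A := H))))
        ∘ₗ (ρT ρ ∘ₗ TensorProduct.map S S) = _
    rw [flip₂_mapSopL hco]
  have f5 : ρT ρ ∘ₗ TensorProduct.map S S = conv (conv (px S) (ρT ρ)) (qy S) :=
    foxMain ρ hρ
  have hRHS : flip₂ ∘ₗ ((θ ∘ₗ dbrMap ρ) ∘ₗ TensorProduct.map S S)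
      = conv (conv (px (i₂ ∘ₗ S))
          (conv (conv (conv (px (i₁ ∘ₗ S)) (px i₂)) (chat ∘ₗ ρT ρ))
            (conv (qy (i₁ ∘ₗ S)) (qy i₂)))) (qy (i₂ ∘ₗ S)) := by
    rw [W1 ρ hco]
    rw [conv_precomp (TensorProduct.map S S) (comulC_precomp_SS hco)]
    rw [conv_precomp (TensorProduct.map S S) (comulC_precomp_SS hco)]
    rw [qy_precomp_SS, px_precomp_SS]
    rw [antihom_conv hccC flip₂ (flip₂_antimul (H := H))
      (qy ((i₁ : H →ₗ[ℂ] H ⊗[ℂ] Hᵐᵒᵖ) ∘ₗ S))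
      (conv (B₂ ρ ∘ₗ TensorProduct.map S S) (px (i₁ ∘ₗ S)))]
    rw [antihom_conv hccC flip₂ (flip₂_antimul (H := H))
      (B₂ ρ ∘ₗ TensorProduct.map S S) (px ((i₁ : H →ₗ[ℂ] H ⊗[ℂ] Hᵐᵒᵖ) ∘ₗ S))]
    rw [comp_px, comp_qy, f2, f4, f5]
    rw [hom_conv chat (chat_mul (H := H)) (conv (px S) (ρT ρ)) (qy S)]
    rw [hom_conv chat (chat_mul (H := H)) (px S) (ρT ρ)]
    rw [comp_px, comp_qy]
    rw [px_chatS hco hinv, qy_chatS hco hinv]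
  rw [hLHS, hRHS]
  -- now pure convolution algebra
  have hcomm : ∀ c d : H ⊗[ℂ] H, (px ((i₂ : H →ₗ[ℂ] H ⊗[ℂ] Hᵐᵒᵖ) ∘ₗ S)) c * (px (i₁ ∘ₗ S)) d
      = (px (i₁ ∘ₗ S)) d * (px (i₂ ∘ₗ S)) c := by
    intro c d
    have h3 : (px ((i₂ : H →ₗ[ℂ] H ⊗[ℂ] Hᵐᵒᵖ) ∘ₗ S)) c = i₂ ((px S) c) := by
      rw [← comp_px]; rfl
    have h1 : (px ((i₁ : H →ₗ[ℂ] H ⊗[ℂ] Hᵐᵒᵖ) ∘ₗ S)) d = i₁ ((px S) d) := by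
      rw [← comp_px]; rfl
    rw [h3, h1, i₂_i₁_comm]
  set P1 := px ((i₁ : H →ₗ[ℂ] H ⊗[ℂ] Hᵐᵒᵖ) ∘ₗ S)
  set P3 := px ((i₂ : H →ₗ[ℂ] H ⊗[ℂ] Hᵐᵒᵖ) ∘ₗ S)
  set P4 := px (i₂ : H →ₗ[ℂ] H ⊗[ℂ] Hᵐᵒᵖ)
  set Q1 := qy ((i₁ : H →ₗ[ℂ] H ⊗[ℂ] Hᵐᵒᵖ) ∘ₗ S)
  set Q3 := qy ((i₂ : H →ₗ[ℂ] H ⊗[ℂ] Hᵐᵒᵖ) ∘ₗ S)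
  set Q4 := qy (i₂ : H →ₗ[ℂ] H ⊗[ℂ] Hᵐᵒᵖ)
  set D := chat ∘ₗ ρT ρ
  symm
  calc conv (conv P3 (conv (conv (conv P1 P4) D) (conv Q1 Q4))) Q3
      = conv P3 (conv (conv (conv (conv P1 P4) D) (conv Q1 Q4)) Q3) := ca _ _ _
    _ = conv P3 (conv (conv (conv P1 P4) D) (conv (conv Q1 Q4) Q3)) := by
        rw [ca (conv (conv P1 P4) D) (conv Q1 Q4) Q3]
    _ = conv P3 (conv (conv (conv P1 P4) D) (conv Q1 (conv Q4 Q3))) := by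
        rw [ca Q1 Q4 Q3]
    _ = conv P3 (conv (conv (conv P1 P4) D) Q1) := by
        rw [conv_Q4_Q3 hco, cr]
    _ = conv P3 (conv (conv P1 (conv P4 D)) Q1) := by rw [ca P1 P4 D]
    _ = conv P3 (conv P1 (conv (conv P4 D) Q1)) := by rw [ca P1 (conv P4 D) Q1]
    _ = conv (conv P3 P1) (conv (conv P4 D) Q1) := (ca _ _ _).symm
    _ = conv (conv P1 P3) (conv (conv P4 D) Q1) := by rw [conv_comm hccC P3 P1 hcomm]
    _ = conv P1 (conv P3 (conv (conv P4 D) Q1)) := ca _ _ _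
    _ = conv P1 (conv P3 (conv P4 (conv D Q1))) := by rw [ca P4 D Q1]
    _ = conv P1 (conv (conv P3 P4) (conv D Q1)) := by rw [ca P3 P4 (conv D Q1)]
    _ = conv P1 (conv cunit (conv D Q1)) := by rw [conv_P3_P4 hco]
    _ = conv P1 (conv D Q1) := by rw [cl]
    _ = conv (conv P1 D) Q1 := (ca _ _ _).symm

lemma θ_mapSS_pt (z : H ⊗[ℂ] H) :
    θ (TensorProduct.map S S z) = S₂ (θ z) := by
  induction z using TensorProduct.induction_on with
  | zero => simp
  | add u v hu hv => simp only [map_add, hu, hv]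
  | tmul x y => simp

lemma θ_flip_pt (z : H ⊗[ℂ] H) : θ (flipT z) = flip₂ (θ z) := by
  induction z using TensorProduct.induction_on with
  | zero => simp
  | add u v hu hv => simp only [map_add, hu, hv]
  | tmul x y => simp [flipT]

end Final

/-- The double bracket associated with an antisymmetric Fox pairing
on a cocommutative involutive Hopf algebra is adapted to the antipode:
`(S ⊗ S)(⟨⟨a,b⟩⟩_ρ) = (⟨⟨S a, S b⟩⟩_ρ)^∘`. -/
theorem dbr_antipode_adapted
    (hco : IsCocomm H) (hinv : IsInvolutive H)
    (ρ : H →ₗ[ℂ] H →ₗ[ℂ] H) (hρ : IsFoxPairing ρ) (hanti : IsAntisymmetric ρ)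
    (a b : H) :
    TensorProduct.map S S (dbrMap ρ (a ⊗ₜ[ℂ] b)) = flipT (dbrMap ρ (S a ⊗ₜ[ℂ] S b)) := by
  have hmain := main_map ρ hco hinv hρ
  have h := congrFun (congrArg (fun (f : H ⊗[ℂ] H →ₗ[ℂ] H ⊗[ℂ] Hᵐᵒᵖ) =>
    (f : H ⊗[ℂ] H → H ⊗[ℂ] Hᵐᵒᵖ)) hmain) (a ⊗ₜ[ℂ] b)
  simp only [LinearMap.comp_apply, TensorProduct.map_tmul] at h
  have key : θ (TensorProduct.map S S (dbrMap ρ (a ⊗ₜ[ℂ] b)))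
      = θ (flipT (dbrMap ρ (S a ⊗ₜ[ℂ] S b))) := by
    rw [θ_mapSS_pt, θ_flip_pt]
    exact h
  have := congrArg unθ key
  rwa [unθ_θ, unθ_θ] at this

end Stmt12
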